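/- arXiv:1711.07159 — 10 statements merged into one kernel-verified Lean document; each statement's English description precedes it below -/
import Mathlib

section
/- For all natural numbers a, b, c, d, the binomial identity C(a+b, a) · C(a+c+d, d) = Σ_{j=0}^{min(a,d)} C(c+d, c+j) · C(b+j, j) · C(a+b, j+b) holds. -/
open Finset

lemma aux_choose (a b j : ℕ) (hj : j ≤ a) :
    (b + j).choose j * (a + b).choose (j + b) = a.choose j * (a + b).choose a := by
  have h1 : (a + b).choose (j + b) * (j + b).choose j
      = (a + b).choose j * (a + b - j).choose (j + b - j) :=
    Nat.choose_mul (by omega)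
  have h2 : (a + b).choose a * a.choose j
      = (a + b).choose j * (a + b - j).choose (a - j) :=
    Nat.choose_mul (by omega)
  have h3 : (a + b - j).choose (j + b - j) = (a + b - j).choose (a - j) := by
    have : j + b - j = b := by omega
    rw [this, ← Nat.choose_symm (n := a + b - j) (k := a - j) (by omega)]
    congr 1
    omega
  have hbj : b + j = j + b := by omega
  rw [hbj, mul_comm, h1, h3, ← h2, mul_comm]

/-- For all natural numbers `a, b, c, d`:
`C(a+b, a) * C(a+c+d, d) = ∑_{j=0}^{min a d} C(c+d, c+j) * C(b+j, j) * C(a+b, j+b)`. -/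
theorem stmt_0 (a b c d : ℕ) :
    (a + b).choose a * (a + c + d).choose d =
      ∑ j ∈ Finset.range (min a d + 1),
        (c + d).choose (c + j) * (b + j).choose j * (a + b).choose (j + b) := by
  have step1 : ∀ j ∈ Finset.range (min a d + 1),
      (c + d).choose (c + j) * (b + j).choose j * (a + b).choose (j + b)
        = (a + b).choose a * ((c + d).choose (c + j) * a.choose j) := by
    intro j hj
    rw [Finset.mem_range] at hj
    rw [mul_assoc, aux_choose a b j (by omega)]
    ring
  rw [Finset.sum_congr rfl step1, ← Finset.mul_sum]
  congr 1
  -- Vandermonde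
  have hV : (a + c + d).choose d
      = ∑ k ∈ Finset.range (d + 1), a.choose k * (c + d).choose (d - k) := by
    rw [add_assoc, Nat.add_choose_eq, Finset.Nat.sum_antidiagonal_eq_sum_range_succ_mk]
  rw [hV]
  have step2 : ∀ k ∈ Finset.range (d + 1),
      a.choose k * (c + d).choose (d - k)
        = (c + d).choose (c + k) * a.choose k := by
    intro k hk
    rw [Finset.mem_range] at hk
    rw [← Nat.choose_symm (n := c + d) (k := c + k) (by omega)]
    have : c + d - (c + k) = d - k := by omega
    rw [this, mul_comm]
  rw [Finset.sum_congr rfl step2]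
  symm
  apply Finset.sum_subset
  · intro x hx
    simp only [Finset.mem_range] at *
    omega
  · intro x hx hx'
    simp only [Finset.mem_range] at *
    have : a.choose x = 0 := Nat.choose_eq_zero_of_lt (by omega)
    rw [this, mul_zero]
end

section
/- Let A be a finite-dimensional self-injective algebra over a field k and M a finite-dimensional faithful right A-module. Then some finite direct sum of copies of M contains the regular module A as a direct summand. -/
/-- Let `A` be a finite-dimensional self-injective algebra over a field `k`
and `M` a finite-dimensional faithful right `A`-module.  Then some finite direct sum of
copies of `M` contains the regular module `A` as a direct summand, i.e. there is a split
injection of right `A`-modules `A → M^{⊕r}`. -/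
theorem stmt_2 (k : Type*) [Field k] (A : Type*) [Ring A] [Algebra k A]
    [FiniteDimensional k A] [Module.Injective Aᵐᵒᵖ A]
    (M : Type*) [AddCommGroup M] [Module k M] [Module Aᵐᵒᵖ M]
    [IsScalarTower k Aᵐᵒᵖ M] [FiniteDimensional k M] [FaithfulSMul Aᵐᵒᵖ M] :
    ∃ (r : ℕ) (f : A →ₗ[Aᵐᵒᵖ] (Fin r → M)) (g : (Fin r → M) →ₗ[Aᵐᵒᵖ] A),
      g.comp f = LinearMap.id := by
  classical
  -- take a `k`-basis of `M`
  obtain ⟨r, b⟩ : ∃ r, Nonempty (Module.Basis (Fin r) k M) :=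
    ⟨Module.finrank k M, ⟨Module.finBasis k M⟩⟩
  obtain ⟨b⟩ := b
  -- the map `a ↦ (fun i => op a • b i)` is `Aᵐᵒᵖ`-linear
  let f : A →ₗ[Aᵐᵒᵖ] (Fin r → M) :=
    { toFun := fun a i => MulOpposite.op a • b i
      map_add' := by
        intro x y; funext i
        simp [MulOpposite.op_add, add_smul]
      map_smul' := by
        intro c x; funext i
        simp only [RingHom.id_apply, Pi.smul_apply]
        rw [MulOpposite.smul_eq_mul_unop, MulOpposite.op_mul, MulOpposite.op_unop, mul_smul] }
  -- injectivity of `f` from faithfulness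
  have hf : Function.Injective f := by
    intro x y hxy
    have h : ∀ i, MulOpposite.op x • b i = MulOpposite.op y • b i := fun i =>
      congrFun hxy i
    have hm : ∀ m : M, ∀ a : A, MulOpposite.op a • m =
        Finset.univ.sum fun i => b.repr m i • (MulOpposite.op a • b i) := by
      intro m a
      conv_lhs => rw [← b.sum_repr m]
      rw [Finset.smul_sum]
      refine Finset.sum_congr rfl fun i _ => ?_
      rw [← algebraMap_smul Aᵐᵒᵖ (b.repr m i) (b i), smul_smul, ← Algebra.commutes,
        ← smul_smul, algebraMap_smul]
    have : MulOpposite.op x = MulOpposite.op y := by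
      refine FaithfulSMul.eq_of_smul_eq_smul (M := Aᵐᵒᵖ) (α := M) (fun m => ?_)
      rw [hm m x, hm m y]
      exact Finset.sum_congr rfl fun i _ => by rw [h i]
    exact MulOpposite.op_injective this
  -- self-injectivity gives the retraction
  have baer : Module.Baer Aᵐᵒᵖ A := Module.Baer.of_injective ‹Module.Injective Aᵐᵒᵖ A›
  obtain ⟨g, hg⟩ := baer.extension_property f hf LinearMap.id
  exact ⟨r, f, g, hg⟩
end

section
/- Let A be a finite-dimensional self-injective algebra over a field k, M a finite-dimensional faithful right A-module, and B = End_A(M). Then the canonical algebra map A → End_B(M), sending a to the map m ↦ m·a, is an isomorphism (i.e., A and B satisfy the double centralizer property on M). -/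
open MulOpposite

universe u v w

/-- Extension lemma for injective modules across universes. -/
lemma ext_of_module_injective {R : Type u} [Ring R] {Q : Type u} [AddCommGroup Q] [Module R Q]
    (inj : Module.Injective R Q) {Y : Type w} [AddCommGroup Y] [Module R Y]
    (f : Q →ₗ[R] Y) (hf : Function.Injective f) : ∃ h : Y →ₗ[R] Q, ∀ x, h (f x) = x := by
  have inj2 : Module.Injective R (ULift.{w} Q) := Module.ulift_injective_of_injective R inj
  set eQ := (ULift.moduleEquiv : ULift.{w} Q ≃ₗ[R] Q)
  set eY := (ULift.moduleEquiv : ULift.{u} Y ≃ₗ[R] Y)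
  obtain ⟨h', hh'⟩ := inj2.out
    (eY.symm.toLinearMap ∘ₗ f ∘ₗ eQ.toLinearMap)
    (by exact eY.symm.injective.comp (hf.comp eQ.injective))
    (LinearMap.id : ULift.{w} Q →ₗ[R] ULift.{w} Q)
  refine ⟨eQ.toLinearMap ∘ₗ h' ∘ₗ eY.symm.toLinearMap, fun q => ?_⟩
  have := hh' (eQ.symm q)
  simpa using congrArg eQ this

/-- Let `A` be a finite-dimensional self-injective algebra over a field `k`
(the regular right module `A` is injective over itself), `M` a finite-dimensional faithful
right `A`-module, and `B = End_A(M)`.  Then the canonical algebra map `A → End_B(M)`,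
sending `a` to `m ↦ m·a`, is an isomorphism (the double centralizer property). -/
theorem stmt_3 (k : Type*) [Field k] (A : Type*) [Ring A] [Algebra k A]
    [FiniteDimensional k A] [Module.Injective Aᵐᵒᵖ A]
    (M : Type*) [AddCommGroup M] [Module k M] [Module Aᵐᵒᵖ M]
    [IsScalarTower k Aᵐᵒᵖ M] [FiniteDimensional k M] [FaithfulSMul Aᵐᵒᵖ M] :
    Function.Bijective
      (Module.toModuleEnd (Module.End Aᵐᵒᵖ M) M :
        Aᵐᵒᵖ →+* Module.End (Module.End Aᵐᵒᵖ M) M) := by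
  classical
  set B := Module.End Aᵐᵒᵖ M with hB
  -- the map `ρ m : A →ₗ[Aᵐᵒᵖ] M`, `x ↦ op x • m`
  have hsmul : ∀ (r : Aᵐᵒᵖ) (x : A), op (r • x) = r * op x := by
    intro r x
    rw [MulOpposite.smul_eq_mul_unop, op_mul, op_unop]
  let ρ : M → (A →ₗ[Aᵐᵒᵖ] M) := fun m =>
    { toFun := fun x => op x • m
      map_add' := fun x y => by simp only [op_add, add_smul]
      map_smul' := fun r x => by simp only [RingHom.id_apply, hsmul r x, mul_smul] }
  constructor
  · -- injectivity, from faithfulness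
    intro a b hab
    refine FaithfulSMul.eq_of_smul_eq_smul (α := M) fun m => ?_
    exact LinearMap.congr_fun hab m
  · -- surjectivity
    intro f
    set n := Module.finrank k M
    set b : Module.Basis (Fin n) k M := Module.finBasis k M
    -- the embedding of `A` into `M^n`
    let ι : A →ₗ[Aᵐᵒᵖ] (Fin n → M) := LinearMap.pi fun i => ρ (b i)
    have hι : Function.Injective ι := by
      intro x y hxy
      have h1 : ∀ i, op x • b i = op y • b i := fun i => congrFun hxy i
      have h2 : ∀ m : M, op x • m = op y • m := by
        have hlin : DistribMulAction.toLinearMap k M (op x)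
            = DistribMulAction.toLinearMap k M (op y) := b.ext h1
        intro m
        exact DFunLike.congr_fun hlin m
      have := FaithfulSMul.eq_of_smul_eq_smul (α := M) h2
      exact op_injective this
    obtain ⟨π, hπ⟩ := ext_of_module_injective ‹Module.Injective Aᵐᵒᵖ A› ι hι
    -- key: `f` commutes with every `Aᵐᵒᵖ`-linear map `M^n → M`
    have key : ∀ (g : (Fin n → M) →ₗ[Aᵐᵒᵖ] M) (x : Fin n → M),
        f (g x) = g (fun i => f (x i)) := by
      intro g x
      have hx : x = ∑ i, Pi.single i (x i) := (Finset.univ_sum_single x).symm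
      calc f (g x) = ∑ i, f (g (Pi.single i (x i))) := by
            conv_lhs => rw [hx]
            rw [map_sum, map_sum]
        _ = ∑ i, g (Pi.single i (f (x i))) := by
            refine Finset.sum_congr rfl fun i _ => ?_
            have hf := f.map_smul (g ∘ₗ LinearMap.single Aᵐᵒᵖ (fun _ => M) i) (x i)
            simpa [Module.End.smul_def] using hf
        _ = g (fun i => f (x i)) := by
            rw [← map_sum]
            congr 1
            exact Finset.univ_sum_single _
    -- the witness
    set a : A := π (fun i => f (ι 1 i)) with ha
    refine ⟨op a, ?_⟩
    ext m
    have h1 : (ρ m ∘ₗ π) (ι 1) = m := by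
      simp only [LinearMap.comp_apply, hπ]
      show op (1 : A) • m = m
      rw [op_one, one_smul]
    have h2 : f ((ρ m ∘ₗ π) (ι 1)) = (ρ m ∘ₗ π) (fun i => f (ι 1 i)) := key _ _
    rw [h1] at h2
    show op a • m = f m
    rw [h2]
    rfl
end

section
/- Let A be a finite-dimensional self-injective algebra, M a finite-dimensional faithful right A-module, and B = End_A(M). Then the centers of A and B are canonically isomorphic as algebras. -/
open MulOpposite

/-- Let `A` be a finite-dimensional self-injective algebra over a field `k`,
`M` a finite-dimensional faithful right `A`-module, and `B = End_A(M)`.  Then the centers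
of `A` and `B` are isomorphic as rings (canonically, via the action of `z(A)` on `M`). -/
theorem stmt_4 (k : Type*) [Field k] (A : Type*) [Ring A] [Algebra k A]
    [FiniteDimensional k A] [Module.Injective Aᵐᵒᵖ A]
    (M : Type*) [AddCommGroup M] [Module k M] [Module Aᵐᵒᵖ M]
    [IsScalarTower k Aᵐᵒᵖ M] [FiniteDimensional k M] [FaithfulSMul Aᵐᵒᵖ M] :
    Nonempty (Subring.center A ≃+* Subring.center (Module.End Aᵐᵒᵖ M)) := by
  classical
  -- the k-action on M factors through Aᵐᵒᵖ
  have key_smul : ∀ (c : k) (m : M), c • m = (algebraMap k Aᵐᵒᵖ c) • m := by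
    intro c m
    rw [Algebra.algebraMap_eq_smul_one, smul_assoc, one_smul]
  have smul_comm' : ∀ (x : Aᵐᵒᵖ) (c : k) (m : M), x • c • m = c • x • m := by
    intro x c m
    rw [key_smul, key_smul, ← mul_smul, ← mul_smul, Algebra.commutes]
  -- a finite spanning family
  obtain ⟨n, s, hs⟩ := Module.Finite.exists_fin (R := k) (M := M)
  have span_all : ∀ (P : Submodule k M), (∀ i, s i ∈ P) → ∀ m, m ∈ P := by
    intro P hP m
    have hle : Submodule.span k (Set.range s) ≤ P :=
      Submodule.span_le.mpr (by rintro _ ⟨i, rfl⟩; exact hP i)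
    exact hle (hs.symm ▸ Submodule.mem_top)
  have ext_smul : ∀ (x y : Aᵐᵒᵖ), (∀ i, x • s i = y • s i) → x = y := by
    intro x y h
    refine FaithfulSMul.eq_of_smul_eq_smul (α := M) (fun m => ?_)
    let P : Submodule k M :=
      { carrier := {m | x • m = y • m}
        add_mem' := fun {u v} hu hv => by
          simp only [Set.mem_setOf_eq, smul_add] at *; rw [hu, hv]
        zero_mem' := by simp
        smul_mem' := fun c m hm => by
          simp only [Set.mem_setOf_eq] at *
          rw [smul_comm' x c m, smul_comm' y c m, hm] }
    exact span_all P h m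
  -- the embedding A ↪ Mⁿ as right A-modules
  let lι : A →ₗ[Aᵐᵒᵖ] (Fin n → M) :=
    { toFun := fun a i => op a • s i
      map_add' := fun a b => by
        funext i; simp [op_add, add_smul]
      map_smul' := fun c a => by
        funext i
        simp only [RingHom.id_apply, Pi.smul_apply]
        have : op (c • a) = c * op a := by
          rw [MulOpposite.smul_eq_mul_unop, op_mul, op_unop]
        rw [this, mul_smul] }
  have lι_apply : ∀ (a : A) (i : Fin n), lι a i = op a • s i := fun a i => rfl
  have hinj : Function.Injective lι := by
    rw [injective_iff_map_eq_zero]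
    intro a ha
    have h0 : op a = op (0 : A) := by
      refine ext_smul _ _ (fun i => ?_)
      have := congrFun ha i
      simpa [lι_apply] using this
    exact op_injective h0
  -- retraction from self-injectivity
  obtain ⟨π, hπ⟩ := Module.Injective.extension_property Aᵐᵒᵖ A A (Fin n → M) lι hinj LinearMap.id
  have hπ' : ∀ a : A, π (lι a) = a := fun a => congrFun (congrArg DFunLike.coe hπ) a
  -- centrality: central elements give A-linear endomorphisms
  have hc : ∀ a ∈ Subring.center A, ∀ (x : Aᵐᵒᵖ) (m : M), (op a) • x • m = x • (op a) • m := by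
    intro a ha x m
    rw [← mul_smul, ← mul_smul]
    congr 1
    induction x using MulOpposite.rec' with
    | h c =>
      rw [← op_mul, ← op_mul]
      exact congrArg op (Subring.mem_center_iff.mp ha c)
  let ρ : Subring.center A → Module.End Aᵐᵒᵖ M := fun a =>
    { toFun := fun m => op a.1 • m
      map_add' := fun u v => smul_add _ u v
      map_smul' := fun x m => by simpa using hc a.1 a.2 x m }
  have ρ_apply : ∀ (a : Subring.center A) (m : M), ρ a m = op a.1 • m := fun a m => rfl
  have ρ_mem : ∀ a : Subring.center A, ρ a ∈ Subring.center (Module.End Aᵐᵒᵖ M) := by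
    intro a
    refine Subring.mem_center_iff.mpr (fun g => ?_)
    ext m
    simp only [Module.End.mul_apply, ρ_apply]
    exact (g.map_smul (op a.1) m)
  let F : Subring.center A →+* Subring.center (Module.End Aᵐᵒᵖ M) :=
    { toFun := fun a => ⟨ρ a, ρ_mem a⟩
      map_one' := by
        ext m
        simp [ρ_apply]
      map_mul' := fun a b => by
        ext m
        show op (a.1 * b.1) • m = op a.1 • op b.1 • m
        rw [← mul_smul, ← op_mul, Subring.mem_center_iff.mp a.2 b.1]
      map_zero' := by
        ext m
        simp [ρ_apply]
      map_add' := fun a b => by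
        ext m
        simp [ρ_apply, op_add, add_smul] }
  refine ⟨RingEquiv.ofBijective F ⟨?_, ?_⟩⟩
  · -- injectivity
    intro a b hab
    have h1 : ρ a = ρ b := congrArg Subtype.val hab
    have h2 : ∀ m : M, op a.1 • m = op b.1 • m := fun m => LinearMap.congr_fun h1 m
    have := FaithfulSMul.eq_of_smul_eq_smul (α := M) h2
    exact Subtype.ext (op_injective this)
  · -- surjectivity
    rintro ⟨φ, hφ⟩
    have hφc : ∀ (g : Module.End Aᵐᵒᵖ M) (m : M), φ (g m) = g (φ m) := by
      intro g m
      have := Subring.mem_center_iff.mp hφ g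
      exact (LinearMap.congr_fun this m).symm
    set e : (Fin n → M) →ₗ[Aᵐᵒᵖ] (Fin n → M) := lι ∘ₗ π with he
    have comm : ∀ (v : Fin n → M) (i : Fin n),
        φ (e v i) = e (fun j => φ (v j)) i := by
      intro v i
      have hv : ∑ j, Pi.single j (v j) = v := Finset.univ_sum_single v
      have step : ∀ (w : Fin n → M), e w i = ∑ j, ((LinearMap.proj i) ∘ₗ e ∘ₗ
          (LinearMap.single Aᵐᵒᵖ (fun _ : Fin n => M) j)) (w j) := by
        intro w
        conv_lhs => rw [← Finset.univ_sum_single w]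
        rw [map_sum]
        simp [LinearMap.proj, Finset.sum_apply]
      rw [step v, map_sum, step (fun j => φ (v j))]
      refine Finset.sum_congr rfl (fun j _ => ?_)
      exact hφc ((LinearMap.proj i) ∘ₗ e ∘ₗ (LinearMap.single Aᵐᵒᵖ (fun _ : Fin n => M) j)) (v j)
    have hone : lι 1 = s := by
      funext i; simp [lι_apply]
    have hes : e s = s := by
      rw [← hone]; show lι (π (lι 1)) = lι 1; rw [hπ']
    set a : A := π (fun i => φ (s i)) with hadef
    have h1 : ∀ i, φ (s i) = op a • s i := by
      have hw : (fun i => φ (s i)) = lι a := by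
        funext i
        have c1 : φ (e s i) = e (fun j => φ (s j)) i := comm s i
        rw [hes] at c1
        calc φ (s i) = e (fun j => φ (s j)) i := c1
          _ = lι (π (fun j => φ (s j))) i := rfl
          _ = lι a i := rfl
      intro i
      rw [← lι_apply a i, ← hw]
    have h2 : ∀ m : M, φ m = op a • m := by
      intro m
      let P : Submodule k M :=
        { carrier := {m | φ m = op a • m}
          add_mem' := fun {u v} hu hv => by
            simp only [Set.mem_setOf_eq, map_add, smul_add] at *; rw [hu, hv]
          zero_mem' := by simp
          smul_mem' := fun c m hm => by
            simp only [Set.mem_setOf_eq] at *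
            rw [key_smul c m, φ.map_smul, hm, ← mul_smul, ← mul_smul, Algebra.commutes] }
      exact span_all P h1 m
    have ha : a ∈ Subring.center A := by
      refine Subring.mem_center_iff.mpr (fun c => ?_)
      have : op (c * a) = op (a * c) := by
        refine FaithfulSMul.eq_of_smul_eq_smul (α := M) (fun m => ?_)
        rw [op_mul, op_mul, mul_smul, mul_smul, ← h2 (op c • m), φ.map_smul, h2 m]
      exact op_injective this
    refine ⟨⟨a, ha⟩, ?_⟩
    exact Subtype.ext (LinearMap.ext fun m => (h2 m).symm)
end

section
/- Let A and B be rings and M a (B, A)-bimodule such that the canonical maps B → End_A(M_A) and A → End_B(_B M) are both isomorphisms (double centralizer). Then the left dual Hom_B(_B M, B) and the right dual Hom_A(M_A, A) are canonically isomorphic as (A, B)-bimodules. -/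
open MulOpposite

section Aux

variable {A B M : Type*} [Ring A] [Ring B] [AddCommGroup M]
    [Module Aᵐᵒᵖ M] [Module B M]
    [SMulCommClass B Aᵐᵒᵖ M] [SMulCommClass Aᵐᵒᵖ B M]

/-- The `B`-linear endomorphism `y ↦ g y • x`. -/
def stmt6Eg (g : M →ₗ[B] B) (x : M) : Module.End B M where
  toFun y := g y • x
  map_add' y z := by simp [add_smul]
  map_smul' b y := by simp [mul_smul]

/-- The `Aᵐᵒᵖ`-linear endomorphism `x ↦ op (f x) • y`. -/
def stmt6Ef (f : M →ₗ[Aᵐᵒᵖ] A) (y : M) : Module.End Aᵐᵒᵖ M where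
  toFun x := op (f x) • y
  map_add' x z := by simp [add_smul]
  map_smul' a x := by
    simp only [map_smul, RingHom.id_apply]
    rw [← mul_smul]
    congr 1

variable (hB : Function.Bijective
      (Module.toModuleEnd Aᵐᵒᵖ M : B →+* Module.End Aᵐᵒᵖ M))
    (hA : Function.Bijective
      (Module.toModuleEnd B M : Aᵐᵒᵖ →+* Module.End B M))

noncomputable def stmt6eB : B ≃+* Module.End Aᵐᵒᵖ M := RingEquiv.ofBijective _ hB
noncomputable def stmt6eA : Aᵐᵒᵖ ≃+* Module.End B M := RingEquiv.ofBijective _ hA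

lemma stmt6eA_apply (a : Aᵐᵒᵖ) (y : M) : stmt6eA hA a y = a • y := rfl
lemma stmt6eB_apply (b : B) (y : M) : stmt6eB hB b y = b • y := rfl

lemma stmt6eA_symm_spec (E : Module.End B M) (y : M) :
    ((stmt6eA hA).symm E : Aᵐᵒᵖ) • y = E y := by
  conv_rhs => rw [← (stmt6eA hA).apply_symm_apply E]
  rfl

lemma stmt6eB_symm_spec (E : Module.End Aᵐᵒᵖ M) (y : M) :
    ((stmt6eB hB).symm E : B) • y = E y := by
  conv_rhs => rw [← (stmt6eB hB).apply_symm_apply E]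
  rfl

/-- `φ g` as a function. -/
noncomputable def stmt6phi (g : M →ₗ[B] B) : M →ₗ[Aᵐᵒᵖ] A where
  toFun x := unop ((stmt6eA hA).symm (stmt6Eg g x))
  map_add' x z := by
    have : stmt6Eg g (x + z) = stmt6Eg g x + stmt6Eg g z := by
      ext y; simp [stmt6Eg, smul_add]
    rw [this, map_add, unop_add]
  map_smul' a x := by
    have : stmt6Eg g (a • x) = stmt6eA hA a * stmt6Eg g x := by
      ext y
      show g y • (a • x) = a • (g y • x)
      rw [smul_comm]
    rw [this, map_mul, (stmt6eA hA).symm_apply_apply, unop_mul, RingHom.id_apply]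
    induction a using MulOpposite.rec' with
    | h a => rw [op_smul_eq_mul, unop_op]

/-- The characterizing property: `op (stmt6phi hA g x) • y = g y • x`. -/
lemma stmt6phi_spec (g : M →ₗ[B] B) (x y : M) :
    op (stmt6phi hA g x) • y = g y • x := by
  show ((stmt6eA hA).symm (stmt6Eg g x) : Aᵐᵒᵖ) • y = _
  rw [stmt6eA_symm_spec]
  rfl

/-- Uniqueness. -/
lemma stmt6phi_unique (g : M →ₗ[B] B) (x : M) (c : A)
    (h : ∀ y, op c • y = g y • x) : stmt6phi hA g x = c := by
  have : stmt6eA hA (op c) = stmt6Eg g x := by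
    ext y; rw [stmt6eA_apply]; exact h y
  have h2 : op c = (stmt6eA hA).symm (stmt6Eg g x) := by
    rw [← this, (stmt6eA hA).symm_apply_apply]
  have := congrArg unop h2
  simpa [stmt6phi] using this.symm

/-- `ψ f` as a function. -/
noncomputable def stmt6psi (f : M →ₗ[Aᵐᵒᵖ] A) : M →ₗ[B] B where
  toFun y := (stmt6eB hB).symm (stmt6Ef f y)
  map_add' y z := by
    have : stmt6Ef f (y + z) = stmt6Ef f y + stmt6Ef f z := by
      ext x; simp [stmt6Ef, smul_add]
    rw [this, map_add]
  map_smul' b y := by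
    have : stmt6Ef f (b • y) = stmt6eB hB b * stmt6Ef f y := by
      ext x
      show op (f x) • (b • y) = b • (op (f x) • y)
      rw [smul_comm]
    rw [this, map_mul, (stmt6eB hB).symm_apply_apply, RingHom.id_apply, smul_eq_mul]

lemma stmt6psi_spec (f : M →ₗ[Aᵐᵒᵖ] A) (x y : M) :
    stmt6psi hB f y • x = op (f x) • y := by
  show ((stmt6eB hB).symm (stmt6Ef f y) : B) • x = _
  rw [stmt6eB_symm_spec]
  rfl

lemma stmt6psi_unique (f : M →ₗ[Aᵐᵒᵖ] A) (y : M) (c : B)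
    (h : ∀ x, c • x = op (f x) • y) : stmt6psi hB f y = c := by
  have : stmt6eB hB c = stmt6Ef f y := by
    ext x; rw [stmt6eB_apply]; exact h x
  have h2 : c = (stmt6eB hB).symm (stmt6Ef f y) := by
    rw [← this, (stmt6eB hB).symm_apply_apply]
  exact h2.symm

end Aux

/-- Let `A`, `B` be rings and `M` a `(B,A)`-bimodule such that the canonical
maps `B → End_A(M)` and `A → End_B(M)` are both isomorphisms (double centralizer).  Then the
left dual `Hom_B(M, B)` and the right dual `Hom_A(M, A)` are canonically isomorphic as
`(A,B)`-bimodules: there is an additive isomorphism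
`φ : Hom_B(M,B) ≃+ Hom_A(M,A)` characterized by `y·⟨φ(g), x⟩_A = ⟨y, g⟩_B·x` which moreover
intertwines the left `A`-actions and right `B`-actions on the two duals. -/
theorem stmt_6 (A B M : Type*) [Ring A] [Ring B] [AddCommGroup M]
    [Module Aᵐᵒᵖ M] [Module B M]
    [SMulCommClass B Aᵐᵒᵖ M] [SMulCommClass Aᵐᵒᵖ B M]
    (hB : Function.Bijective
      (Module.toModuleEnd Aᵐᵒᵖ M : B →+* Module.End Aᵐᵒᵖ M))
    (hA : Function.Bijective
      (Module.toModuleEnd B M : Aᵐᵒᵖ →+* Module.End B M)) :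
    ∃ φ : (M →ₗ[B] B) ≃+ (M →ₗ[Aᵐᵒᵖ] A),
      -- the characterizing compatibility of the evaluation pairings
      (∀ (g : M →ₗ[B] B) (x y : M), (op ((φ g) x)) • y = (g y) • x) ∧
      -- φ intertwines the left A-actions: (a·g)(m) = g(m·a) corresponds to a·(φ g)
      (∀ (a : A) (g g' : M →ₗ[B] B),
        (∀ m : M, g' m = g ((op a) • m)) → ∀ m : M, (φ g') m = a * (φ g) m) ∧
      -- φ intertwines the right B-actions: (g·b)(m) = g(m)·b corresponds to (φ g)∘(b•)
      (∀ (b : B) (g g' : M →ₗ[B] B),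
        (∀ m : M, g' m = g m * b) → ∀ m : M, (φ g') m = (φ g) (b • m)) := by
  refine ⟨{ toFun := stmt6phi hA, invFun := stmt6psi hB,
            left_inv := ?_, right_inv := ?_, map_add' := ?_ }, ?_, ?_, ?_⟩
  · intro g
    ext y
    exact stmt6psi_unique hB (stmt6phi hA g) y (g y)
      (fun x => (stmt6phi_spec hA g x y).symm)
  · intro f
    ext x
    exact stmt6phi_unique hA (stmt6psi hB f) x (f x)
      (fun y => (stmt6psi_spec hB f x y).symm)
  · intro g h
    ext x
    refine stmt6phi_unique hA (g + h) x (stmt6phi hA g x + stmt6phi hA h x) fun y => ?_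
    simp [add_smul, stmt6phi_spec]
  · intro g x y
    exact stmt6phi_spec hA g x y
  · intro a g g' hgg' m
    refine stmt6phi_unique hA g' m (a * stmt6phi hA g m) fun y => ?_
    rw [op_mul, mul_smul, stmt6phi_spec, ← hgg' y]
  · intro b g g' hgg' m
    refine stmt6phi_unique hA g' m (stmt6phi hA g (b • m)) fun y => ?_
    rw [stmt6phi_spec, hgg' y, mul_smul]
end

section
/- Let A be a finite-dimensional symmetric Frobenius algebra over a field k and M a finite-dimensional faithful right A-module with B = End_A(M). Then Hom_B(_B M, B) is isomorphic as an (A, B)-bimodule to the k-linear dual M* = Hom_k(M, k). -/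
open MulOpposite

section Aux

variable {k : Type*} [Field k] {A : Type*} [Ring A] [Algebra k A]
variable {M : Type*} [AddCommGroup M] [Module k M] [Module Aᵐᵒᵖ M] [IsScalarTower k Aᵐᵒᵖ M]

/-- Right-A-linear maps `M → A` preserve `k`-scalars. -/
lemma stmt8_map_ksmul (f : M →ₗ[Aᵐᵒᵖ] A) (c : k) (m : M) : f (c • m) = c • f m := by
  rw [← algebraMap_smul Aᵐᵒᵖ c m, map_smul, MulOpposite.smul_eq_mul_unop,
    MulOpposite.algebraMap_apply, unop_op, ← Algebra.commutes, ← Algebra.smul_def]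

lemma stmt8_smul_comm (c : k) (u : Aᵐᵒᵖ) (m : M) : u • c • m = c • u • m := by
  rw [← algebraMap_smul Aᵐᵒᵖ c m, ← algebraMap_smul Aᵐᵒᵖ c (u • m), ← mul_smul, ← mul_smul,
    Algebra.commutes]

/-- `θ_{n,f} : x ↦ n · f x`, a right-`A`-linear endomorphism of `M`. -/
def stmt8_theta (n : M) (f : M →ₗ[Aᵐᵒᵖ] A) : Module.End Aᵐᵒᵖ M where
  toFun x := op (f x) • n
  map_add' x y := by
    show op (f (x + y)) • n = op (f x) • n + op (f y) • n
    rw [map_add, op_add, add_smul]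
  map_smul' c x := by
    show op (f (c • x)) • n = c • (op (f x) • n)
    rw [map_smul, MulOpposite.smul_eq_mul_unop, op_mul, op_unop, mul_smul]

@[simp] lemma stmt8_theta_apply (n : M) (f : M →ₗ[Aᵐᵒᵖ] A) (x : M) :
    stmt8_theta n f x = op (f x) • n := rfl

/-- `ψ f : n ↦ θ_{n,f}`, a `B`-linear map `M → B` where `B = End_A M`. -/
def stmt8_psi (f : M →ₗ[Aᵐᵒᵖ] A) :
    M →ₗ[Module.End Aᵐᵒᵖ M] Module.End Aᵐᵒᵖ M where
  toFun n := stmt8_theta n f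
  map_add' n₁ n₂ := by ext x; simp [smul_add]
  map_smul' b n := by
    ext x
    simp only [stmt8_theta_apply, RingHom.id_apply, smul_eq_mul, Module.End.mul_apply,
      Module.End.smul_def, map_smul]

@[simp] lemma stmt8_psi_apply (f : M →ₗ[Aᵐᵒᵖ] A) (n x : M) :
    stmt8_psi f n x = op (f x) • n := rfl

variable (ε : A →ₗ[k] k)

/-- The map `a ↦ ε(a ⬝ ·)` from `A` to its dual. -/
def stmt8_D : A →ₗ[k] Module.Dual k A where
  toFun a := ε ∘ₗ LinearMap.mulLeft k a
  map_add' a b := by ext y; simp [add_mul]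
  map_smul' c a := by ext y; simp [smul_mul_assoc]

@[simp] lemma stmt8_D_apply (a y : A) : stmt8_D ε a y = ε (a * y) := rfl

lemma stmt8_D_bijective [FiniteDimensional k A]
    (hnd : ∀ a : A, a ≠ 0 → ∃ b : A, ε (a * b) ≠ 0) :
    Function.Bijective (stmt8_D ε) := by
  have hinj : Function.Injective (stmt8_D ε) := by
    rw [injective_iff_map_eq_zero]
    intro a ha
    by_contra h
    obtain ⟨b, hb⟩ := hnd a h
    exact hb (by simpa using congrFun (congrArg DFunLike.coe ha) b)
  exact ⟨hinj, (LinearMap.injective_iff_surjective_of_finrank_eq_finrank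
    (Subspace.dual_finrank_eq (V := A)).symm).mp hinj⟩

/-- Every `k`-linear functional on `M` is of the form `ε ∘ f` for a right-`A`-linear
`f : M → A`. -/
lemma stmt8_exists_flambda [FiniteDimensional k A]
    (hnd : ∀ a : A, a ≠ 0 → ∃ b : A, ε (a * b) ≠ 0) (l : M →ₗ[k] k) :
    ∃ f : M →ₗ[Aᵐᵒᵖ] A, ∀ m, ε (f m) = l m := by
  have hbij := stmt8_D_bijective ε hnd
  let E := LinearEquiv.ofBijective (stmt8_D ε) hbij
  let μ : M →ₗ[k] Module.Dual k A :=
    { toFun := fun m =>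
        { toFun := fun y => l (op y • m)
          map_add' := fun y z => by
            show l (op (y + z) • m) = l (op y • m) + l (op z • m)
            rw [op_add, add_smul, map_add]
          map_smul' := fun c y => by
            show l (op (c • y) • m) = c • l (op y • m)
            rw [MulOpposite.op_smul, smul_assoc, map_smul] }
      map_add' := fun m₁ m₂ => by
        ext y
        show l (op y • (m₁ + m₂)) = l (op y • m₁) + l (op y • m₂)
        rw [smul_add, map_add]
      map_smul' := fun c m => by
        ext y
        show l (op y • c • m) = c • l (op y • m)
        rw [stmt8_smul_comm, map_smul] }
  let f0 : M →ₗ[k] A := E.symm.toLinearMap ∘ₗ μ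
  have hf0 : ∀ m, stmt8_D ε (f0 m) = μ m := fun m => E.apply_symm_apply (μ m)
  have hf0' : ∀ m y, ε (f0 m * y) = l (op y • m) := fun m y => congrFun
    (congrArg DFunLike.coe (hf0 m)) y
  refine ⟨{ toFun := f0
            map_add' := f0.map_add
            map_smul' := fun c m => ?_ }, fun m => ?_⟩
  · rw [RingHom.id_apply]
    apply hbij.injective
    ext y
    rw [stmt8_D_apply, hf0' (c • m) y, stmt8_D_apply, MulOpposite.smul_eq_mul_unop,
      mul_assoc, hf0' m (c.unop * y)]
    rw [← mul_smul]
    congr 2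
  · have := hf0' m 1
    rwa [mul_one, op_one, one_smul] at this

lemma stmt8_op_sum {n : ℕ} (v : Fin n → A) :
    op (∑ i, v i) = ∑ i, op (v i) :=
  map_sum (opAddEquiv : A ≃+ Aᵐᵒᵖ) v Finset.univ

/-- The trace ideal argument: faithfulness plus the Frobenius structure produce a finite
"generator family" `(fᵢ, mᵢ)` with `∑ fᵢ (mᵢ) = 1`. -/
lemma stmt8_gen [FiniteDimensional k A] [FiniteDimensional k M] [FaithfulSMul Aᵐᵒᵖ M]
    (hnd : ∀ a : A, a ≠ 0 → ∃ b : A, ε (a * b) ≠ 0)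
    (hsym : ∀ a b : A, ε (a * b) = ε (b * a)) :
    ∃ (n : ℕ) (f : Fin n → (M →ₗ[Aᵐᵒᵖ] A)) (m : Fin n → M), ∑ i, f i (m i) = 1 := by
  classical
  set S : Set A := Set.range (fun p : (M →ₗ[Aᵐᵒᵖ] A) × M => p.1 p.2) with hS
  have hT : Submodule.span k S = ⊤ := by
    by_contra h
    obtain ⟨l0, hl0ne, hl0⟩ := Submodule.exists_dual_map_eq_bot_of_lt_top
      (lt_top_iff_ne_top.mpr h) inferInstance
    obtain ⟨a, ha⟩ := (stmt8_D_bijective ε hnd).surjective l0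
    have hane : a ≠ 0 := by
      rintro rfl
      apply hl0ne
      ext y
      rw [← ha]
      simp
    have hz : ∀ t ∈ Submodule.span k S, ε (a * t) = 0 := by
      intro t ht
      have hmem : l0 t ∈ (Submodule.span k S).map l0 := Submodule.mem_map_of_mem ht
      rw [hl0] at hmem
      have h0 : l0 t = 0 := (Submodule.mem_bot k).mp hmem
      calc ε (a * t) = stmt8_D ε a t := rfl
        _ = l0 t := by rw [ha]
        _ = 0 := h0
    have hzero : ∀ m : M, op a • m = 0 := by
      intro m
      rw [← Module.forall_dual_apply_eq_zero_iff k]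
      intro l'
      obtain ⟨f', hf'⟩ := stmt8_exists_flambda ε hnd l'
      have hfa : f' (op a • m) = f' m * a := by
        rw [map_smul, MulOpposite.smul_eq_mul_unop, unop_op]
      rw [← hf' (op a • m), hfa, hsym]
      exact hz _ (Submodule.subset_span ⟨(f', m), rfl⟩)
    refine hane (op_injective ?_)
    rw [op_zero]
    exact FaithfulSMul.eq_of_smul_eq_smul fun m : M => by rw [hzero m, zero_smul]
  have h1 : (1 : A) ∈ Submodule.span k S := hT ▸ Submodule.mem_top
  obtain ⟨n, c, s, hs⟩ := Submodule.mem_span_set'.mp h1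
  choose p hp using fun i => (s i).2
  refine ⟨n, fun i => (p i).1, fun i => c i • (p i).2, ?_⟩
  rw [← hs]
  refine Finset.sum_congr rfl fun i _ => ?_
  rw [stmt8_map_ksmul]
  exact congrArg (fun z => c i • z) (hp i)

lemma stmt8_psi_bijective [FiniteDimensional k A] [FiniteDimensional k M]
    [FaithfulSMul Aᵐᵒᵖ M]
    (hnd : ∀ a : A, a ≠ 0 → ∃ b : A, ε (a * b) ≠ 0)
    (hsym : ∀ a b : A, ε (a * b) = ε (b * a)) :
    Function.Bijective
      (fun f : M →ₗ[Aᵐᵒᵖ] A =>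
        (stmt8_psi f : M →ₗ[Module.End Aᵐᵒᵖ M] Module.End Aᵐᵒᵖ M)) := by
  constructor
  · intro f₁ f₂ h
    ext x
    apply op_injective
    refine FaithfulSMul.eq_of_smul_eq_smul fun n : M => ?_
    have := congrFun (congrArg DFunLike.coe
      (congrFun (congrArg DFunLike.coe h) n)) x
    simpa using this
  · intro g
    obtain ⟨n, f, m, hgen⟩ := stmt8_gen (M := M) ε hnd hsym
    refine ⟨∑ i, (f i) ∘ₗ (g (m i) : M →ₗ[Aᵐᵒᵖ] M), ?_⟩
    apply LinearMap.ext; intro nn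
    apply LinearMap.ext; intro x
    have hn : (∑ i, stmt8_theta nn (f i) • m i) = nn := by
      have h1 : (∑ i, stmt8_theta nn (f i) • m i) = ∑ i, op (f i (m i)) • nn := by
        simp [Module.End.smul_def]
      rw [h1, ← Finset.sum_smul, ← stmt8_op_sum, hgen, op_one, one_smul]
    calc stmt8_psi (∑ i, (f i) ∘ₗ (g (m i) : M →ₗ[Aᵐᵒᵖ] M)) nn x
        = op ((∑ i, (f i) ∘ₗ (g (m i) : M →ₗ[Aᵐᵒᵖ] M)) x) • nn := rfl
      _ = op (∑ i, f i ((g (m i)) x)) • nn := by rw [LinearMap.sum_apply]; rfl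
      _ = ∑ i, op (f i ((g (m i)) x)) • nn := by rw [stmt8_op_sum, Finset.sum_smul]
      _ = ∑ i, (stmt8_theta nn (f i) • g (m i)) x := by
          refine Finset.sum_congr rfl fun i _ => ?_
          rw [smul_eq_mul, Module.End.mul_apply, stmt8_theta_apply]
      _ = (∑ i, stmt8_theta nn (f i) • g (m i)) x := (LinearMap.sum_apply _ _ _).symm
      _ = g (∑ i, stmt8_theta nn (f i) • m i) x := by
          rw [map_sum]
          congr 1
          refine Finset.sum_congr rfl fun i _ => ?_
          rw [map_smul]
      _ = g nn x := by rw [hn]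

end Aux

/-- Let `A` be a finite-dimensional symmetric Frobenius algebra over a
field `k` (nondegenerate trace `ε` with `ε(ab) = ε(ba)`) and `M` a finite-dimensional
faithful right `A`-module with `B = End_A(M)`.  Then `Hom_B(M, B)` is isomorphic, as an
`(A,B)`-bimodule, to the `k`-linear dual `M* = Hom_k(M, k)`:  there is an additive
isomorphism `φ` intertwining the left `A`-actions `(a·g)(m) = g(m·a)`, `(a·f)(m) = f(m·a)`
and the right `B`-actions `(g·b)(m) = g(m)·b`, `(f·b)(m) = f(b•m)`. -/
theorem stmt_8 (k : Type*) [Field k] (A : Type*) [Ring A] [Algebra k A]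
    [FiniteDimensional k A]
    (ε : A →ₗ[k] k)
    (hnd : ∀ a : A, a ≠ 0 → ∃ b : A, ε (a * b) ≠ 0)
    (hsym : ∀ a b : A, ε (a * b) = ε (b * a))
    (M : Type*) [AddCommGroup M] [Module k M] [Module Aᵐᵒᵖ M]
    [IsScalarTower k Aᵐᵒᵖ M] [FiniteDimensional k M] [FaithfulSMul Aᵐᵒᵖ M] :
    ∃ φ : (M →ₗ[Module.End Aᵐᵒᵖ M] Module.End Aᵐᵒᵖ M) ≃+ (M →ₗ[k] k),
      -- φ intertwines the left A-actions
      (∀ (a : A) (g g' : M →ₗ[Module.End Aᵐᵒᵖ M] Module.End Aᵐᵒᵖ M),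
        (∀ m : M, g' m = g ((op a) • m)) →
          ∀ m : M, (φ g') m = (φ g) ((op a) • m)) ∧
      -- φ intertwines the right B-actions
      (∀ (b : Module.End Aᵐᵒᵖ M) (g g' : M →ₗ[Module.End Aᵐᵒᵖ M] Module.End Aᵐᵒᵖ M),
        (∀ m : M, g' m = g m * b) → ∀ m : M, (φ g') m = (φ g) (b • m)) := by
  classical
  let Ehom : (M →ₗ[Aᵐᵒᵖ] A) →+ (M →ₗ[k] k) :=
    { toFun := fun f =>
        { toFun := fun m => ε (f m)
          map_add' := fun m₁ m₂ => by
            show ε (f (m₁ + m₂)) = ε (f m₁) + ε (f m₂)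
            rw [map_add, map_add]
          map_smul' := fun c m => by
            show ε (f (c • m)) = c • ε (f m)
            rw [stmt8_map_ksmul, map_smul] }
      map_zero' := by ext m; simp
      map_add' := fun f₁ f₂ => by ext m; simp }
  have hEinj : Function.Injective Ehom := by
    rw [injective_iff_map_eq_zero]
    intro f hf
    have hf' : ∀ m, ε (f m) = 0 := fun m => congrFun (congrArg DFunLike.coe hf) m
    ext x
    by_contra hx
    obtain ⟨y, hy⟩ := hnd (f x) hx
    apply hy
    have h2 : f (op y • x) = f x * y := by
      rw [map_smul, MulOpposite.smul_eq_mul_unop, unop_op]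
    rw [← h2]
    exact hf' _
  have hEsurj : Function.Surjective Ehom := by
    intro l
    obtain ⟨f, hf⟩ := stmt8_exists_flambda ε hnd l
    exact ⟨f, LinearMap.ext hf⟩
  let psiHom : (M →ₗ[Aᵐᵒᵖ] A) →+ (M →ₗ[Module.End Aᵐᵒᵖ M] Module.End Aᵐᵒᵖ M) :=
    { toFun := stmt8_psi
      map_zero' := by
        apply LinearMap.ext; intro nx; apply LinearMap.ext; intro x
        show op ((0 : M →ₗ[Aᵐᵒᵖ] A) x) • nx = (0 : Module.End Aᵐᵒᵖ M) x
        simp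
      map_add' := fun f₁ f₂ => by
        apply LinearMap.ext; intro nx; apply LinearMap.ext; intro x
        show op ((f₁ + f₂) x) • nx = op (f₁ x) • nx + op (f₂ x) • nx
        rw [LinearMap.add_apply, op_add, add_smul] }
  have hpsi : Function.Bijective psiHom := stmt8_psi_bijective ε hnd hsym
  let E1 := AddEquiv.ofBijective Ehom ⟨hEinj, hEsurj⟩
  let E2 := AddEquiv.ofBijective psiHom hpsi
  refine ⟨E2.symm.trans E1, ?_, ?_⟩
  · intro a g g' hgg' m
    set f : M →ₗ[Aᵐᵒᵖ] A := E2.symm g with hfdef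
    set f' : M →ₗ[Aᵐᵒᵖ] A := E2.symm g' with hf'def
    have hg : ∀ (n x : M), op (f x) • n = g n x := by
      intro n x
      have h2 : stmt8_psi f = g := E2.apply_symm_apply g
      rw [← h2]; rfl
    have hg' : ∀ (n x : M), op (f' x) • n = g' n x := by
      intro n x
      have h2 : stmt8_psi f' = g' := E2.apply_symm_apply g'
      rw [← h2]; rfl
    have key : ∀ x, f' x = a * f x := by
      intro x
      refine op_injective (FaithfulSMul.eq_of_smul_eq_smul fun nn : M => ?_)
      rw [hg' nn x, hgg' nn, ← hg (op a • nn) x, ← mul_smul, ← op_mul]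
    have hL : (E2.symm.trans E1) g' m = ε (f' m) := rfl
    have hR : (E2.symm.trans E1) g (op a • m) = ε (f (op a • m)) := rfl
    rw [hL, hR, key m, hsym, map_smul, MulOpposite.smul_eq_mul_unop, unop_op]
  · intro b g g' hgg' m
    set f : M →ₗ[Aᵐᵒᵖ] A := E2.symm g with hfdef
    set f' : M →ₗ[Aᵐᵒᵖ] A := E2.symm g' with hf'def
    have hg : ∀ (n x : M), op (f x) • n = g n x := by
      intro n x
      have h2 : stmt8_psi f = g := E2.apply_symm_apply g
      rw [← h2]; rfl
    have hg' : ∀ (n x : M), op (f' x) • n = g' n x := by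
      intro n x
      have h2 : stmt8_psi f' = g' := E2.apply_symm_apply g'
      rw [← h2]; rfl
    have key : ∀ x, f' x = f (b x) := by
      intro x
      refine op_injective (FaithfulSMul.eq_of_smul_eq_smul fun nn : M => ?_)
      rw [hg' nn x, hgg' nn, Module.End.mul_apply, ← hg nn (b x)]
    have hL : (E2.symm.trans E1) g' m = ε (f' m) := rfl
    have hR : (E2.symm.trans E1) g (b • m) = ε (f (b • m)) := rfl
    rw [hL, hR, key m]
    rfl
end

section
/- In the nilHecke algebra NH_n (generators y_1,...,y_n of degree 2 and ψ_1,...,ψ_{n-1} of degree -2 subject to the nilHecke relations), the element e_n = y_1^{n-1} y_2^{n-2} ⋯ y_n^0 ψ_{w_0}, where ψ_{w_0} corresponds to the longest element of S_n, is an idempotent: e_n² = e_n. -/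
/-! The nilHecke algebra `NH n` over a field `k`, presented by generators
`y i` (for `i < n`) and `ψ i` (for `i + 1 < n`) and the nilHecke relations
(generators out of range are set to zero). Indices are 0-based: `ψ i` crosses
strands `i` and `i+1`. -/

namespace Stmt10

variable (k : Type*) [Field k]

/-- The distinguished generators of the free algebra: `Yf i` will become `y i`,
`Pf i` will become `ψ i`. -/
def Yf (i : ℕ) : FreeAlgebra k (ℕ ⊕ ℕ) := FreeAlgebra.ι k (Sum.inl i)

def Pf (i : ℕ) : FreeAlgebra k (ℕ ⊕ ℕ) := FreeAlgebra.ι k (Sum.inr i)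

/-- The defining relations of the nilHecke algebra `NH_n`. -/
inductive Rel (n : ℕ) : FreeAlgebra k (ℕ ⊕ ℕ) → FreeAlgebra k (ℕ ⊕ ℕ) → Prop
  | yy (i j : ℕ) : Rel n (Yf k i * Yf k j) (Yf k j * Yf k i)
  | ypsi (i j : ℕ) (h1 : i ≠ j) (h2 : i ≠ j + 1) :
      Rel n (Yf k i * Pf k j) (Pf k j * Yf k i)
  | yp (i : ℕ) (h : i + 1 < n) : Rel n (Yf k i * Pf k i) (Pf k i * Yf k (i+1) + 1)
  | py (i : ℕ) (h : i + 1 < n) : Rel n (Pf k i * Yf k i) (Yf k (i+1) * Pf k i + 1)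
  | psisq (i : ℕ) : Rel n (Pf k i * Pf k i) 0
  | far (i j : ℕ) (h : i + 1 < j) : Rel n (Pf k i * Pf k j) (Pf k j * Pf k i)
  | braid (i : ℕ) :
      Rel n (Pf k i * Pf k (i+1) * Pf k i) (Pf k (i+1) * Pf k i * Pf k (i+1))
  | ybound (i : ℕ) (h : n ≤ i) : Rel n (Yf k i) 0
  | pbound (i : ℕ) (h : n ≤ i + 1) : Rel n (Pf k i) 0

/-- The nilHecke algebra on `n` strands. -/
abbrev NH (n : ℕ) := RingQuot (Rel k n)

/-- The dot generator `y i`. -/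
def y (n i : ℕ) : NH k n := RingQuot.mkAlgHom k (Rel k n) (Yf k i)

/-- The crossing generator `ψ i`. -/
def psi (n i : ℕ) : NH k n := RingQuot.mkAlgHom k (Rel k n) (Pf k i)

/-- The product `ψ_L := ψ_{i₁} ⋯ ψ_{i_r}` along a list of indices. -/
def psiList (n : ℕ) (L : List ℕ) : NH k n := (L.map (psi k n)).prod

/-- `ψ_{w₀}`: the nilHecke element of the longest permutation of `S_n`, defined by the
reduced word `(s_0)(s_1 s_0)(s_2 s_1 s_0)⋯(s_{n-2} ⋯ s_0)`. -/
def psiW0 (n : ℕ) : NH k n :=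
  ((List.range (n-1)).map (fun m => psiList k n ((List.range (m+1)).reverse))).prod

/-- The element `e_n = y_0^{n-1} y_1^{n-2} ⋯ y_{n-1}^0 · ψ_{w₀}`. -/
def eIdem (n : ℕ) : NH k n :=
  ((List.range n).map (fun i => y k n i ^ (n - 1 - i))).prod * psiW0 k n

end Stmt10

namespace Stmt10

section Pf10
variable (k : Type*) [Field k] (n : ℕ)

lemma yy_rel (i j : ℕ) : y k n i * y k n j = y k n j * y k n i := by
  simpa [y, map_mul] using RingQuot.mkAlgHom_rel k (Rel.yy (k := k) (n := n) i j)

lemma ypsi_rel (i j : ℕ) (h1 : i ≠ j) (h2 : i ≠ j + 1) :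
    y k n i * psi k n j = psi k n j * y k n i := by
  simpa [y, psi, map_mul] using RingQuot.mkAlgHom_rel k (Rel.ypsi (k := k) (n := n) i j h1 h2)

lemma yp_rel (i : ℕ) (h : i + 1 < n) :
    y k n i * psi k n i = psi k n i * y k n (i+1) + 1 := by
  simpa [y, psi, map_mul, map_add, map_one] using
    RingQuot.mkAlgHom_rel k (Rel.yp (k := k) i h)

lemma py_rel (i : ℕ) (h : i + 1 < n) :
    psi k n i * y k n i = y k n (i+1) * psi k n i + 1 := by
  simpa [y, psi, map_mul, map_add, map_one] using
    RingQuot.mkAlgHom_rel k (Rel.py (k := k) i h)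

lemma psisq_rel (i : ℕ) : psi k n i * psi k n i = 0 := by
  simpa [psi, map_mul, map_zero] using
    RingQuot.mkAlgHom_rel k (Rel.psisq (k := k) (n := n) i)

lemma far_rel (i j : ℕ) (h : i + 1 < j) :
    psi k n i * psi k n j = psi k n j * psi k n i := by
  simpa [psi, map_mul] using RingQuot.mkAlgHom_rel k (Rel.far (k := k) (n := n) i j h)

lemma braid_rel (i : ℕ) :
    psi k n i * psi k n (i+1) * psi k n i = psi k n (i+1) * psi k n i * psi k n (i+1) := by
  simpa [psi, map_mul] using RingQuot.mkAlgHom_rel k (Rel.braid (k := k) (n := n) i)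

lemma psi_ysucc (i : ℕ) (h : i + 1 < n) :
    psi k n i * y k n (i+1) = y k n i * psi k n i - 1 :=
  eq_sub_iff_add_eq.mpr (yp_rel k n i h).symm

lemma commute_y_y (i j : ℕ) : Commute (y k n i) (y k n j) := yy_rel k n i j

lemma commute_psi_y (j i : ℕ) (h1 : i ≠ j) (h2 : i ≠ j + 1) :
    Commute (psi k n j) (y k n i) := (ypsi_rel k n i j h1 h2).symm

lemma commute_psi_psi (i j : ℕ) (h : i + 1 < j) :
    Commute (psi k n i) (psi k n j) := far_rel k n i j h

lemma psiList_nil : psiList k n [] = 1 := rfl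

lemma psiList_cons (a : ℕ) (L : List ℕ) :
    psiList k n (a :: L) = psi k n a * psiList k n L := by
  simp [psiList]

lemma psiList_append (L1 L2 : List ℕ) :
    psiList k n (L1 ++ L2) = psiList k n L1 * psiList k n L2 := by
  simp [psiList]

lemma commute_psi_psiList (i : ℕ) (L : List ℕ) (h : ∀ x ∈ L, x + 1 < i) :
    Commute (psi k n i) (psiList k n L) := by
  induction L with
  | nil => rw [psiList_nil]; exact Commute.one_right _
  | cons a L ih =>
      rw [psiList_cons]
      exact ((commute_psi_psi k n a i (h a (by simp))).symm).mul_right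
        (ih fun x hx => h x (by simp [hx]))

end Pf10
end Stmt10
namespace Stmt10
section Pf10b
variable (k : Type*) [Field k] (n : ℕ)

/-- `cc j = ψ_j ψ_{j-1} ⋯ ψ_0`. -/
def cc (j : ℕ) : NH k n := psiList k n ((List.range (j+1)).reverse)

lemma cc_zero : cc k n 0 = psi k n 0 := by
  show psiList k n ((List.range 1).reverse) = psi k n 0
  rw [show List.range 1 = [0] by simp [List.range_succ]]
  simp [psiList]

lemma cc_succ (j : ℕ) : cc k n (j+1) = psi k n (j+1) * cc k n j := by
  rw [cc, cc, List.range_succ, List.reverse_append]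
  simp [psiList_cons]

lemma commute_psi_cc (i j : ℕ) (h : j + 2 ≤ i) : Commute (psi k n i) (cc k n j) := by
  refine commute_psi_psiList k n i _ fun x hx => ?_
  simp only [List.mem_reverse, List.mem_range] at hx
  omega

lemma cc_mul_psi0 (j : ℕ) : cc k n j * psi k n 0 = 0 := by
  induction j with
  | zero => rw [cc_zero]; exact psisq_rel k n 0
  | succ j ih => rw [cc_succ, mul_assoc, ih, mul_zero]

lemma cc_mul_psi (j i : ℕ) (h : i + 1 ≤ j) :
    cc k n j * psi k n (i+1) = psi k n i * cc k n j := by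
  induction j with
  | zero => omega
  | succ j ih =>
      rcases Nat.lt_or_ge (i+1) (j+1) with hj | hj
      · -- i + 1 ≤ j : push through the leading ψ_{j+1}
        rw [cc_succ, mul_assoc, ih (by omega), ← mul_assoc,
          ← far_rel k n i (j+1) (by omega), mul_assoc, ← cc_succ]
      · -- i = j
        have hij : i = j := by omega
        subst hij
        cases i with
        | zero =>
            have hb : psi k n 0 * psi k n 1 * psi k n 0
                = psi k n 1 * psi k n 0 * psi k n 1 := braid_rel k n 0
            rw [cc_succ, cc_zero]
            show psi k n 1 * psi k n 0 * psi k n 1 = psi k n 0 * (psi k n 1 * psi k n 0)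
            rw [← hb, mul_assoc]
        | succ s =>
            have hc : psi k n (s+2) * cc k n s = cc k n s * psi k n (s+2) :=
              (commute_psi_cc k n (s+2) s (by omega)).eq
            have hb : psi k n (s+1) * psi k n (s+2) * psi k n (s+1)
                = psi k n (s+2) * psi k n (s+1) * psi k n (s+2) := braid_rel k n (s+1)
            rw [cc_succ k n (s+1), cc_succ k n s]
            calc psi k n (s+2) * (psi k n (s+1) * cc k n s) * psi k n (s+2)
                = psi k n (s+2) * psi k n (s+1) * (cc k n s * psi k n (s+2)) := by
                  noncomm_ring
              _ = psi k n (s+2) * psi k n (s+1) * (psi k n (s+2) * cc k n s) := by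
                  rw [hc]
              _ = (psi k n (s+2) * psi k n (s+1) * psi k n (s+2)) * cc k n s := by
                  noncomm_ring
              _ = (psi k n (s+1) * psi k n (s+2) * psi k n (s+1)) * cc k n s := by
                  rw [hb]
              _ = psi k n (s+1) * (psi k n (s+2) * (psi k n (s+1) * cc k n s)) := by
                  noncomm_ring

lemma cc_mul_cc (j t : ℕ) (h : t ≤ j) : cc k n j * cc k n t = 0 := by
  induction t with
  | zero => rw [cc_zero]; exact cc_mul_psi0 k n j
  | succ t ih =>
      rw [cc_succ, ← mul_assoc, cc_mul_psi k n j t (by omega), mul_assoc,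
        ih (by omega), mul_zero]

lemma psi_cc_cc (s : ℕ) : psi k n (s+1) * (cc k n s * cc k n (s+1)) = 0 := by
  cases s with
  | zero =>
      have hb : psi k n 0 * psi k n 1 * psi k n 0
          = psi k n 1 * psi k n 0 * psi k n 1 := braid_rel k n 0
      rw [cc_succ, cc_zero]
      calc psi k n 1 * (psi k n 0 * (psi k n 1 * psi k n 0))
          = (psi k n 1 * psi k n 0 * psi k n 1) * psi k n 0 := by noncomm_ring
        _ = (psi k n 0 * psi k n 1 * psi k n 0) * psi k n 0 := by rw [hb]
        _ = psi k n 0 * psi k n 1 * (psi k n 0 * psi k n 0) := by noncomm_ring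
        _ = 0 := by rw [psisq_rel, mul_zero]
  | succ r =>
      have hc : psi k n (r+2) * cc k n r = cc k n r * psi k n (r+2) :=
        (commute_psi_cc k n (r+2) r (by omega)).eq
      have hb : psi k n (r+1) * psi k n (r+2) * psi k n (r+1)
          = psi k n (r+2) * psi k n (r+1) * psi k n (r+2) := braid_rel k n (r+1)
      have hz : cc k n (r+1) * cc k n (r+1) = 0 := cc_mul_cc k n (r+1) (r+1) le_rfl
      have key : psi k n (r+2) * (cc k n (r+1) * (psi k n (r+2) * cc k n (r+1)))
          = psi k n (r+1) * (psi k n (r+2) * (cc k n (r+1) * cc k n (r+1))) := by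
        rw [cc_succ k n r]
        calc psi k n (r+2) * ((psi k n (r+1) * cc k n r) * (psi k n (r+2) * (psi k n (r+1) * cc k n r)))
            = psi k n (r+2) * psi k n (r+1) * (cc k n r * psi k n (r+2)) *
                (psi k n (r+1) * cc k n r) := by noncomm_ring
          _ = psi k n (r+2) * psi k n (r+1) * (psi k n (r+2) * cc k n r) *
                (psi k n (r+1) * cc k n r) := by rw [hc]
          _ = (psi k n (r+2) * psi k n (r+1) * psi k n (r+2)) *
                (cc k n r * (psi k n (r+1) * cc k n r)) := by noncomm_ring
          _ = (psi k n (r+1) * psi k n (r+2) * psi k n (r+1)) *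
                (cc k n r * (psi k n (r+1) * cc k n r)) := by rw [hb]
          _ = psi k n (r+1) * (psi k n (r+2) * ((psi k n (r+1) * cc k n r) *
                (psi k n (r+1) * cc k n r))) := by noncomm_ring
      rw [cc_succ k n (r+1), key, hz, mul_zero, mul_zero]

/-- `PPd t = c_0 c_1 ⋯ c_{t-1}`. -/
def PPd (t : ℕ) : NH k n := ((List.range t).map (cc k n)).prod

lemma PPd_zero : PPd k n 0 = 1 := rfl

lemma PPd_succ (t : ℕ) : PPd k n (t+1) = PPd k n t * cc k n t := by
  rw [PPd, PPd, List.range_succ]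
  simp

lemma psiW0_eq : psiW0 k n = PPd k n (n-1) := rfl

lemma commute_psi_PPd (i T : ℕ) (h : T + 1 ≤ i) : Commute (psi k n i) (PPd k n T) := by
  induction T with
  | zero => rw [PPd_zero]; exact Commute.one_right _
  | succ t ih =>
      rw [PPd_succ]
      exact (ih (by omega)).mul_right (commute_psi_cc k n i t (by omega))

lemma psi_mul_PPd (i T : ℕ) (h : i + 1 ≤ T) : psi k n i * PPd k n T = 0 := by
  induction T with
  | zero => omega
  | succ t ih =>
      rcases Nat.lt_or_ge (i+1) (t+1) with ht | ht
      · rw [PPd_succ, ← mul_assoc, ih (by omega), zero_mul]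
      · have hit : i = t := by omega
        subst hit
        cases i with
        | zero =>
            rw [PPd_succ, PPd_zero, cc_zero, one_mul, psisq_rel]
        | succ s =>
            have hcomm : psi k n (s+1) * PPd k n s = PPd k n s * psi k n (s+1) :=
              (commute_psi_PPd k n (s+1) s (by omega)).eq
            calc psi k n (s+1) * PPd k n (s+2)
                = (psi k n (s+1) * PPd k n s) * (cc k n s * cc k n (s+1)) := by
                  rw [PPd_succ, PPd_succ]; noncomm_ring
              _ = PPd k n s * (psi k n (s+1) * (cc k n s * cc k n (s+1))) := by
                  rw [hcomm]; noncomm_ring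
              _ = 0 := by rw [psi_cc_cc, mul_zero]

end Pf10b
end Stmt10
namespace Stmt10
section Pf10c
variable (k : Type*) [Field k] (n : ℕ)

/-- `Tp m r k = y_r^{m-r} y_{r+1}^{m-r-1} ⋯ y_{r+k-1}^{m-r-k+1}`. -/
def Tp (m : ℕ) : ℕ → ℕ → NH k n
  | _, 0 => 1
  | r, (kk+1) => y k n r ^ (m - r) * Tp m (r+1) kk

lemma Tp_zero (m r : ℕ) : Tp k n m r 0 = 1 := rfl

lemma Tp_succ (m r kk : ℕ) :
    Tp k n m r (kk+1) = y k n r ^ (m - r) * Tp k n m (r+1) kk := rfl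

lemma Tp_append (m : ℕ) : ∀ kk r, Tp k n m r (kk+1) = Tp k n m r kk * y k n (r+kk) ^ (m - r - kk) := by
  intro kk
  induction kk with
  | zero => intro r; simp [Tp_succ, Tp_zero]
  | succ kk ih =>
      intro r
      have e1 : r + 1 + kk = r + (kk+1) := by omega
      have e2 : m - (r+1) - kk = m - r - (kk+1) := by omega
      rw [Tp_succ, ih (r+1), e1, e2, ← mul_assoc, ← Tp_succ]

lemma Tp_list (m : ℕ) : ∀ kk r, Tp k n m r kk
    = ((List.range kk).map (fun t => y k n (r+t) ^ (m - r - t))).prod := by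
  intro kk
  induction kk with
  | zero => intro r; simp [Tp_zero]
  | succ kk ih =>
      intro r
      rw [Tp_append, ih r, List.range_succ]
      simp

lemma commute_psi_Tp_left (j m : ℕ) : ∀ kk r, r + kk ≤ j → Commute (psi k n j) (Tp k n m r kk) := by
  intro kk
  induction kk with
  | zero => intro r _; rw [Tp_zero]; exact Commute.one_right _
  | succ kk ih =>
      intro r h
      rw [Tp_succ]
      exact ((commute_psi_y k n j r (by omega) (by omega)).pow_right _).mul_right
        (ih (r+1) (by omega))

lemma commute_psi_Tp_right (j m : ℕ) : ∀ kk r, j + 2 ≤ r → Commute (psi k n j) (Tp k n m r kk) := by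
  intro kk
  induction kk with
  | zero => intro r _; rw [Tp_zero]; exact Commute.one_right _
  | succ kk ih =>
      intro r h
      rw [Tp_succ]
      exact ((commute_psi_y k n j r (by omega) (by omega)).pow_right _).mul_right
        (ih (r+1) (by omega))

/-- The key local commutation, in abstract form (step). -/
lemma keyC_aux {R : Type*} [Ring R] (u v p U V : R)
    (huv : u * v = v * u) (hUu : u * U = U * u) (hUv : v * U = U * v)
    (hVv : v * V = V * v) (hVu : u * V = V * u)
    (hpu : p * u = v * p + 1) (hpv : p * v = u * p - 1)
    (ih : p * (U * u * V) = U * (V * v) * p + U * V) :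
    p * (U * u * u * (V * v)) = U * u * (V * v * v) * p + U * u * (V * v) := by
  have h1 : U * u * u = u * (U * u) := by rw [← mul_assoc, hUu]
  have hE : v * U * V * v * u = U * u * V * v * v := by
    calc v * U * V * v * u = (v * U) * V * v * u := by noncomm_ring
      _ = (U * v) * V * v * u := by rw [hUv]
      _ = U * (v * V) * v * u := by noncomm_ring
      _ = U * (V * v) * v * u := by rw [hVv]
      _ = U * V * v * (v * u) := by noncomm_ring
      _ = U * V * v * (u * v) := by rw [← huv]
      _ = U * V * (v * u) * v := by noncomm_ring
      _ = U * V * (u * v) * v := by rw [← huv]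
      _ = U * (V * u) * v * v := by noncomm_ring
      _ = U * (u * V) * v * v := by rw [hVu]
      _ = U * u * V * v * v := by noncomm_ring
  calc p * (U * u * u * (V * v))
      = p * (u * (U * u) * (V * v)) := by rw [h1]
    _ = (p * u) * (U * u * V) * v := by noncomm_ring
    _ = (v * p + 1) * (U * u * V) * v := by rw [hpu]
    _ = v * (p * (U * u * V)) * v + (U * u * V) * v := by noncomm_ring
    _ = v * (U * (V * v) * p + U * V) * v + (U * u * V) * v := by rw [ih]
    _ = (v * U * (V * v)) * (p * v) + v * (U * V) * v + (U * u * V) * v := by noncomm_ring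
    _ = (v * U * (V * v)) * (u * p - 1) + v * (U * V) * v + (U * u * V) * v := by rw [hpv]
    _ = ((v * U * V * v) * u) * p + (U * u * V) * v := by noncomm_ring
    _ = ((U * u * V * v) * v) * p + (U * u * V) * v := by rw [show v * U * V * v * u = U * u * V * v * v from hE]
    _ = U * u * (V * v * v) * p + U * u * (V * v) := by noncomm_ring

lemma keyC {R : Type*} [Ring R] (u v p : R) (huv : u * v = v * u)
    (hpu : p * u = v * p + 1) (hpv : p * v = u * p - 1) (a : ℕ) :
    p * (u ^ (a+1) * v ^ a) = u ^ a * v ^ (a+1) * p + u ^ a * v ^ a := by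
  induction a with
  | zero => simpa using hpu
  | succ a ih =>
      have cu : Commute u v := huv
      simp only [pow_succ] at ih ⊢
      exact keyC_aux u v p (u ^ a) (v ^ a) huv
        ((Commute.refl u).pow_right a).eq (cu.symm.pow_right a).eq
        ((Commute.refl v).pow_right a).eq (cu.pow_right a).eq hpu hpv ih

/-- The left ideal generated by `ψ_t`, `t < m`. -/
def Jm (m : ℕ) : Submodule (NH k n) (NH k n) :=
  Submodule.span (NH k n) {x | ∃ t, t < m ∧ x = psi k n t}

lemma mul_mem_Jm {m : ℕ} (a : NH k n) {x : NH k n} (hx : x ∈ Jm k n m) :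
    a * x ∈ Jm k n m := by
  simpa [smul_eq_mul] using Submodule.smul_mem _ a hx

lemma psi_mem_Jm {t m : ℕ} (h : t < m) : psi k n t ∈ Jm k n m :=
  Submodule.subset_span ⟨t, h, rfl⟩

lemma Jm_mul_PPd {m T : ℕ} (hT : m ≤ T) {x : NH k n} (hx : x ∈ Jm k n m) :
    x * PPd k n T = 0 := by
  induction hx using Submodule.span_induction with
  | mem x hx =>
      obtain ⟨t, ht, rfl⟩ := hx
      exact psi_mul_PPd k n t T (by omega)
  | zero => rw [zero_mul]
  | add x y _ _ hx hy => rw [add_mul, hx, hy, add_zero]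
  | smul a x _ hx => rw [smul_eq_mul, mul_assoc, hx, mul_zero]

lemma gamma (m : ℕ) (hm : m < n) :
    ∀ r, r ≤ m →
      psiList k n ((List.range r).reverse) * Tp k n m 0 m
        - Tp k n (m-1) 0 r * Tp k n m r (m - r) ∈ Jm k n m := by
  intro r
  induction r with
  | zero =>
      intro _
      simp only [List.range_zero, List.reverse_nil, psiList_nil, one_mul,
        Nat.sub_zero, Tp_zero]
      rw [sub_self]
      exact zero_mem _
  | succ r ih =>
      intro hr1
      have hrn : r + 1 < n := by omega
      have hIH := ih (by omega)
      set W := psiList k n ((List.range r).reverse) with hWdef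
      set A0 := Tp k n m 0 m with hA0def
      set L := Tp k n (m-1) 0 r with hLdef
      set a := m - r - 1 with hadef
      have ha : m - r = a + 1 := by omega
      set Rest := Tp k n m (r+2) (a-1) with hRdef
      -- decompositions
      have hT2 : Tp k n m (r+1) a = y k n (r+1) ^ a * Rest := by
        rcases Nat.eq_zero_or_pos a with h0 | hpos
        · rw [hRdef, h0]
          simp [Tp_zero]
        · obtain ⟨b, hb⟩ := Nat.exists_eq_succ_of_ne_zero (by omega : a ≠ 0)
          rw [hRdef, hb, Tp_succ]
          have e1 : m - (r+1) = b + 1 := by omega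
          rw [e1, Nat.succ_sub_one]
      have hTd : Tp k n m r (m - r) = y k n r ^ (a+1) * (y k n (r+1) ^ a * Rest) := by
        rw [ha, Tp_succ, ha, hT2]
      have hword : psiList k n ((List.range (r+1)).reverse)
          = psi k n r * W := by
        rw [hWdef, List.range_succ, List.reverse_append]
        simp [psiList_cons]
      have hW' : W * A0 = (W * A0 - L * Tp k n m r (m - r)) + L * Tp k n m r (m - r) := by
        abel
      -- the key commutation
      have hkey := keyC (y k n r) (y k n (r+1)) (psi k n r) (yy_rel k n r (r+1))
        (py_rel k n r hrn) (psi_ysucc k n r hrn) a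
      have hcL : psi k n r * L = L * psi k n r :=
        (commute_psi_Tp_left k n r (m-1) r 0 (by omega)).eq
      have hcR : psi k n r * Rest = Rest * psi k n r :=
        (commute_psi_Tp_right k n r m (a-1) (r+2) (by omega)).eq
      have hL' : Tp k n (m-1) 0 (r+1) = L * y k n r ^ a := by
        rw [Tp_append]
        have e1 : m - 1 - 0 - r = a := by omega
        rw [zero_add, e1]
      have hT' : Tp k n m (r+1) (m - (r+1)) = y k n (r+1) ^ a * Rest := by
        have e1 : m - (r+1) = a := by omega
        rw [e1, hT2]
      have main : psi k n r * (L * Tp k n m r (m - r))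
          = Tp k n (m-1) 0 (r+1) * Tp k n m (r+1) (m - (r+1))
            + (L * (y k n r ^ a * y k n (r+1) ^ (a+1)) * Rest) * psi k n r := by
        calc psi k n r * (L * Tp k n m r (m - r))
            = L * (psi k n r * Tp k n m r (m - r)) := by
              rw [← mul_assoc, hcL, mul_assoc]
          _ = L * (psi k n r * (y k n r ^ (a+1) * y k n (r+1) ^ a) * Rest) := by
              rw [hTd]; noncomm_ring
          _ = L * ((y k n r ^ a * y k n (r+1) ^ (a+1) * psi k n r
                + y k n r ^ a * y k n (r+1) ^ a) * Rest) := by rw [hkey]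
          _ = L * (y k n r ^ a * y k n (r+1) ^ (a+1)) * (psi k n r * Rest)
                + (L * y k n r ^ a) * (y k n (r+1) ^ a * Rest) := by noncomm_ring
          _ = L * (y k n r ^ a * y k n (r+1) ^ (a+1)) * (Rest * psi k n r)
                + (L * y k n r ^ a) * (y k n (r+1) ^ a * Rest) := by rw [hcR]
          _ = Tp k n (m-1) 0 (r+1) * Tp k n m (r+1) (m - (r+1))
                + (L * (y k n r ^ a * y k n (r+1) ^ (a+1)) * Rest) * psi k n r := by
              rw [hL', hT']; noncomm_ring
      have hfinal : psiList k n ((List.range (r+1)).reverse) * A0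
          - Tp k n (m-1) 0 (r+1) * Tp k n m (r+1) (m - (r+1))
          = psi k n r * (W * A0 - L * Tp k n m r (m - r))
            + (L * (y k n r ^ a * y k n (r+1) ^ (a+1)) * Rest) * psi k n r := by
        calc psiList k n ((List.range (r+1)).reverse) * A0
            - Tp k n (m-1) 0 (r+1) * Tp k n m (r+1) (m - (r+1))
            = psi k n r * (W * A0)
              - Tp k n (m-1) 0 (r+1) * Tp k n m (r+1) (m - (r+1)) := by
              rw [hword, mul_assoc]
          _ = psi k n r * ((W * A0 - L * Tp k n m r (m - r)) + L * Tp k n m r (m - r))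
              - Tp k n (m-1) 0 (r+1) * Tp k n m (r+1) (m - (r+1)) := by rw [← hW']
          _ = psi k n r * (W * A0 - L * Tp k n m r (m - r))
              + (psi k n r * (L * Tp k n m r (m - r))
                - Tp k n (m-1) 0 (r+1) * Tp k n m (r+1) (m - (r+1))) := by noncomm_ring
          _ = psi k n r * (W * A0 - L * Tp k n m r (m - r))
              + (L * (y k n r ^ a * y k n (r+1) ^ (a+1)) * Rest) * psi k n r := by
              rw [main]; noncomm_ring
      rw [hfinal]
      exact add_mem (mul_mem_Jm k n _ hIH)
        (mul_mem_Jm k n _ (psi_mem_Jm k n (by omega)))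

lemma mainS : ∀ m, m ≤ n →
    PPd k n (m-1) * Tp k n (m-1) 0 m * PPd k n (m-1) = PPd k n (m-1) := by
  intro m
  induction m with
  | zero => intro _; simp [PPd_zero, Tp_zero]
  | succ m ih =>
      intro hm1
      cases m with
      | zero =>
          simp only [Nat.add_sub_cancel, PPd_zero, Nat.sub_self]
          rw [Tp_succ, Tp_zero, Nat.sub_self, pow_zero, one_mul, one_mul, mul_one]
      | succ t =>
          have hIH : PPd k n t * Tp k n t 0 (t+1) * PPd k n t = PPd k n t := by
            simpa using ih (by omega)
          simp only [Nat.add_sub_cancel]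
          have h1 : Tp k n (t+1) 0 (t+2) = Tp k n (t+1) 0 (t+1) := by
            rw [Tp_append]
            have e1 : t + 1 - 0 - (t+1) = 0 := by omega
            rw [e1, pow_zero, mul_one]
          have hg := gamma k n (t+1) (by omega) (t+1) le_rfl
          have hcw : psiList k n ((List.range (t+1)).reverse) = cc k n t := rfl
          rw [hcw, Nat.add_sub_cancel, Nat.sub_self, Tp_zero, mul_one] at hg
          set j := cc k n t * Tp k n (t+1) 0 (t+1) - Tp k n t 0 (t+1) with hjdef
          have hkill : j * PPd k n (t+1) = 0 := Jm_mul_PPd k n le_rfl hg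
          have hsum : cc k n t * Tp k n (t+1) 0 (t+1) = Tp k n t 0 (t+1) + j := by
            rw [hjdef]; abel
          calc PPd k n (t+1) * Tp k n (t+1) 0 (t+2) * PPd k n (t+1)
              = PPd k n t * (cc k n t * Tp k n (t+1) 0 (t+1)) * PPd k n (t+1) := by
                rw [h1, PPd_succ]; noncomm_ring
            _ = PPd k n t * Tp k n t 0 (t+1) * PPd k n (t+1)
                + PPd k n t * (j * PPd k n (t+1)) := by rw [hsum]; noncomm_ring
            _ = PPd k n t * Tp k n t 0 (t+1) * (PPd k n t * cc k n t) := by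
                rw [hkill, mul_zero, add_zero, PPd_succ]
            _ = (PPd k n t * Tp k n t 0 (t+1) * PPd k n t) * cc k n t := by noncomm_ring
            _ = PPd k n t * cc k n t := by rw [hIH]
            _ = PPd k n (t+1) := (PPd_succ k n t).symm

end Pf10c
end Stmt10

/-- In the nilHecke algebra `NH_n`, the element
`e_n = y_1^{n-1} y_2^{n-2} ⋯ y_n^0 ψ_{w₀}` is an idempotent. -/
theorem stmt_10 (k : Type*) [Field k] (n : ℕ) :
    Stmt10.eIdem k n * Stmt10.eIdem k n = Stmt10.eIdem k n := by
  have hD : ((List.range n).map (fun i => Stmt10.y k n i ^ (n - 1 - i))).prod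
      = Stmt10.Tp k n (n-1) 0 n := by
    rw [Stmt10.Tp_list]
    simp
  have hS := Stmt10.mainS k n n le_rfl
  rw [Stmt10.eIdem, Stmt10.psiW0_eq, hD]
  calc (Stmt10.Tp k n (n-1) 0 n * Stmt10.PPd k n (n-1))
        * (Stmt10.Tp k n (n-1) 0 n * Stmt10.PPd k n (n-1))
      = Stmt10.Tp k n (n-1) 0 n
        * (Stmt10.PPd k n (n-1) * Stmt10.Tp k n (n-1) 0 n * Stmt10.PPd k n (n-1)) := by
        noncomm_ring
    _ = Stmt10.Tp k n (n-1) 0 n * Stmt10.PPd k n (n-1) := by rw [hS]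
end

section
/- Let p be a prime and k a field of characteristic p. On the nilHecke algebra NH_n over k, the derivation ∂ defined on generators by ∂(y_i) = y_i² and ∂(ψ_i) = −y_i ψ_i − ψ_i y_{i+1}, extended by the Leibniz rule, is well-defined (respects all nilHecke relations) and satisfies ∂^p = 0. -/
/-! The nilHecke algebra `NH n` over a field `k`, presented by generators
`y i` (for `i < n`) and `ψ i` (for `i + 1 < n`) and the nilHecke relations
(generators out of range are set to zero). Indices are 0-based: `ψ i` crosses
strands `i` and `i+1`. -/

namespace Stmt11

variable (k : Type*) [Field k]

/-- The distinguished generators of the free algebra: `Yf i` will become `y i`,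
`Pf i` will become `ψ i`. -/
def Yf (i : ℕ) : FreeAlgebra k (ℕ ⊕ ℕ) := FreeAlgebra.ι k (Sum.inl i)

def Pf (i : ℕ) : FreeAlgebra k (ℕ ⊕ ℕ) := FreeAlgebra.ι k (Sum.inr i)

/-- The defining relations of the nilHecke algebra `NH_n`. -/
inductive Rel (n : ℕ) : FreeAlgebra k (ℕ ⊕ ℕ) → FreeAlgebra k (ℕ ⊕ ℕ) → Prop
  | yy (i j : ℕ) : Rel n (Yf k i * Yf k j) (Yf k j * Yf k i)
  | ypsi (i j : ℕ) (h1 : i ≠ j) (h2 : i ≠ j + 1) :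
      Rel n (Yf k i * Pf k j) (Pf k j * Yf k i)
  | yp (i : ℕ) (h : i + 1 < n) : Rel n (Yf k i * Pf k i) (Pf k i * Yf k (i+1) + 1)
  | py (i : ℕ) (h : i + 1 < n) : Rel n (Pf k i * Yf k i) (Yf k (i+1) * Pf k i + 1)
  | psisq (i : ℕ) : Rel n (Pf k i * Pf k i) 0
  | far (i j : ℕ) (h : i + 1 < j) : Rel n (Pf k i * Pf k j) (Pf k j * Pf k i)
  | braid (i : ℕ) :
      Rel n (Pf k i * Pf k (i+1) * Pf k i) (Pf k (i+1) * Pf k i * Pf k (i+1))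
  | ybound (i : ℕ) (h : n ≤ i) : Rel n (Yf k i) 0
  | pbound (i : ℕ) (h : n ≤ i + 1) : Rel n (Pf k i) 0

/-- The nilHecke algebra on `n` strands. -/
abbrev NH (n : ℕ) := RingQuot (Rel k n)

/-- The dot generator `y i`. -/
def y (n i : ℕ) : NH k n := RingQuot.mkAlgHom k (Rel k n) (Yf k i)

/-- The crossing generator `ψ i`. -/
def psi (n i : ℕ) : NH k n := RingQuot.mkAlgHom k (Rel k n) (Pf k i)

/-- The product `ψ_L := ψ_{i₁} ⋯ ψ_{i_r}` along a list of indices. -/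
def psiList (n : ℕ) (L : List ℕ) : NH k n := (L.map (psi k n)).prod

/-- `ψ_{w₀}`: the nilHecke element of the longest permutation of `S_n`, defined by the
reduced word `(s_0)(s_1 s_0)(s_2 s_1 s_0)⋯(s_{n-2} ⋯ s_0)`. -/
def psiW0 (n : ℕ) : NH k n :=
  ((List.range (n-1)).map (fun m => psiList k n ((List.range (m+1)).reverse))).prod

/-- The element `e_n = y_0^{n-1} y_1^{n-2} ⋯ y_{n-1}^0 · ψ_{w₀}`. -/
def eIdem (n : ℕ) : NH k n :=
  ((List.range n).map (fun i => y k n i ^ (n - 1 - i))).prod * psiW0 k n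

end Stmt11

/-! ### Auxiliary material for the proof -/

namespace Stmt11P

open Stmt11 TrivSqZeroExt MulOpposite Finset

/-! #### A generic iterated Leibniz rule -/

lemma iter_leibniz {R : Type*} [Ring R] (D : R →+ R)
    (hL : ∀ a b : R, D (a * b) = D a * b + a * D b) (n : ℕ) (p q : R) :
    (⇑D)^[n] (p * q) =
      ∑ k ∈ range n.succ, (n.choose k • ((⇑D)^[n - k] p * (⇑D)^[k] q)) := by
  induction n with
  | zero => simp
  | succ n IH =>
    calc
      (⇑D)^[n + 1] (p * q) =
          D (∑ k ∈ range n.succ,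
              n.choose k • ((⇑D)^[n - k] p * (⇑D)^[k] q)) := by
        rw [Function.iterate_succ_apply', IH]
      _ = (∑ k ∈ range n.succ,
            n.choose k • ((⇑D)^[n - k + 1] p * (⇑D)^[k] q)) +
          ∑ k ∈ range n.succ,
            n.choose k • ((⇑D)^[n - k] p * (⇑D)^[k + 1] q) := by
        simp_rw [map_sum, AddMonoidHom.map_nsmul, hL, Function.iterate_succ_apply',
          smul_add, sum_add_distrib]
      _ = (∑ k ∈ range n.succ,
                n.choose k.succ • ((⇑D)^[n - k] p * (⇑D)^[k + 1] q)) +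
              1 • ((⇑D)^[n + 1] p * (⇑D)^[0] q) +
            ∑ k ∈ range n.succ, n.choose k • ((⇑D)^[n - k] p * (⇑D)^[k + 1] q) :=
        ?_
      _ = ((∑ k ∈ range n.succ, n.choose k • ((⇑D)^[n - k] p * (⇑D)^[k + 1] q)) +
              ∑ k ∈ range n.succ,
                n.choose k.succ • ((⇑D)^[n - k] p * (⇑D)^[k + 1] q)) +
            1 • ((⇑D)^[n + 1] p * (⇑D)^[0] q) := by
        rw [add_comm, add_assoc]
      _ = (∑ i ∈ range n.succ,
              (n + 1).choose (i + 1) • ((⇑D)^[n + 1 - (i + 1)] p * (⇑D)^[i + 1] q)) +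
            1 • ((⇑D)^[n + 1] p * (⇑D)^[0] q) := by
        simp_rw [Nat.choose_succ_succ, Nat.succ_sub_succ, add_smul, sum_add_distrib]
      _ = ∑ k ∈ range n.succ.succ,
            n.succ.choose k • ((⇑D)^[n.succ - k] p * (⇑D)^[k] q) := by
        rw [sum_range_succ' _ n.succ, Nat.choose_zero_right, tsub_zero]
    congr
    refine (sum_range_succ' _ _).trans (congr_arg₂ (· + ·) ?_ ?_)
    · rw [sum_range_succ, Nat.choose_succ_self, zero_smul, add_zero]
      refine sum_congr rfl fun k hk => ?_
      rw [mem_range] at hk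
      congr
      omega
    · rw [Nat.choose_zero_right, tsub_zero]

/-! #### Generic ring identities verifying that `∂` respects the relations -/

section keys
variable {R : Type*} [Ring R]

lemma swap_ctx {u v : R} (h : u * v = v * u) (t : R) : u * (v * t) = v * (u * t) := by
  rw [← mul_assoc, h, mul_assoc]

lemma key_yy (x z : R) (h : x * z = z * x) :
    x * (z * z) + (x * x) * z = z * (x * x) + (z * z) * x := by
  simp only [mul_assoc, swap_ctx h, h]
  abel

lemma key_ypsi (x a u v : R) (hxa : x * a = a * x) (hxu : x * u = u * x)
    (hxv : x * v = v * x) :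
    x * (-(u * a) - a * v) + (x * x) * a = a * (x * x) + (-(u * a) - a * v) * x := by
  simp only [mul_sub, sub_mul, mul_neg, neg_mul, mul_assoc,
    swap_ctx hxa, swap_ctx hxu, swap_ctx hxv, hxa, hxu, hxv]
  abel

lemma key_yp (x z a : R) :
    x * (-(x * a) - a * z) + (x * x) * a = a * (z * z) + (-(x * a) - a * z) * z := by
  noncomm_ring

lemma key_py (x z a : R) (hxa : x * a = a * z + 1) (hax : a * x = z * a + 1)
    (hxz : x * z = z * x) :
    a * (x * x) + (-(x * a) - a * z) * x = z * (-(x * a) - a * z) + (z * z) * a := by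
  have e1 : a * z = x * a - 1 := by rw [hxa, add_sub_cancel_right]
  have e1' : ∀ t : R, a * (z * t) = x * (a * t) - t := fun t => by
    rw [← mul_assoc, e1, sub_mul, one_mul, mul_assoc]
  have e2' : ∀ t : R, a * (x * t) = z * (a * t) + t := fun t => by
    rw [← mul_assoc, hax, add_mul, one_mul, mul_assoc]
  simp only [mul_sub, sub_mul, mul_neg, neg_mul, mul_add, add_mul, mul_one, one_mul, mul_assoc,
    e1, e1', hax, e2', swap_ctx hxz.symm, hxz.symm, mul_sub, sub_mul, mul_add, add_mul,
    mul_neg, neg_mul]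
  abel

lemma key_psisq (x z a : R) (hxa : x * a = a * z + 1) (hax : a * x = z * a + 1)
    (ha : a * a = 0) :
    a * (-(x * a) - a * z) + (-(x * a) - a * z) * a = 0 := by
  have e1 : a * z = x * a - 1 := by rw [hxa, add_sub_cancel_right]
  have e1' : ∀ t : R, a * (z * t) = x * (a * t) - t := fun t => by
    rw [← mul_assoc, e1, sub_mul, one_mul, mul_assoc]
  have e2' : ∀ t : R, a * (x * t) = z * (a * t) + t := fun t => by
    rw [← mul_assoc, hax, add_mul, one_mul, mul_assoc]
  have ha' : ∀ t : R, a * (a * t) = 0 := fun t => by rw [← mul_assoc, ha, zero_mul]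
  simp only [mul_sub, sub_mul, mul_neg, neg_mul, mul_add, add_mul, mul_one, one_mul, mul_assoc,
    e1, e1', hax, e2', ha, ha', mul_zero, zero_mul, mul_sub, sub_mul, mul_add, add_mul,
    mul_neg, neg_mul]
  abel

lemma key_far (a b x z u v : R) (hab : b * a = a * b) (hxb : b * x = x * b)
    (hzb : b * z = z * b) (hua : u * a = a * u) (hva : v * a = a * v) :
    a * (-(u * b) - b * v) + (-(x * a) - a * z) * b
      = b * (-(x * a) - a * z) + (-(u * b) - b * v) * a := by
  simp only [mul_sub, sub_mul, mul_neg, neg_mul, mul_assoc,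
    swap_ctx hab, swap_ctx hxb, swap_ctx hzb, swap_ctx hua, swap_ctx hva,
    hab, hxb, hzb, hua, hva]
  abel

lemma key_braid (a b x z w : R)
    (hxa : x * a = a * z + 1) (hax : a * x = z * a + 1)
    (hzb : z * b = b * w + 1) (hbz : b * z = w * b + 1)
    (hxb : x * b = b * x) (haw : a * w = w * a)
    (ha : a * a = 0) (hb : b * b = 0)
    (hbr : a * (b * a) = b * (a * b)) :
    a * b * (-(x * a) - a * z) + (a * (-(z * b) - b * w) + (-(x * a) - a * z) * b) * a
      = b * a * (-(z * b) - b * w) + (b * (-(x * a) - a * z) + (-(z * b) - b * w) * a) * b := by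
  have e1 : a * z = x * a - 1 := by rw [hxa, add_sub_cancel_right]
  have e1' : ∀ t : R, a * (z * t) = x * (a * t) - t := fun t => by
    rw [← mul_assoc, e1, sub_mul, one_mul, mul_assoc]
  have e2' : ∀ t : R, a * (x * t) = z * (a * t) + t := fun t => by
    rw [← mul_assoc, hax, add_mul, one_mul, mul_assoc]
  have e3 : b * w = z * b - 1 := by rw [hzb, add_sub_cancel_right]
  have e3' : ∀ t : R, b * (w * t) = z * (b * t) - t := fun t => by
    rw [← mul_assoc, e3, sub_mul, one_mul, mul_assoc]
  have e4' : ∀ t : R, b * (z * t) = w * (b * t) + t := fun t => by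
    rw [← mul_assoc, hbz, add_mul, one_mul, mul_assoc]
  have e5 : b * x = x * b := hxb.symm
  have e5' : ∀ t : R, b * (x * t) = x * (b * t) := swap_ctx e5
  have e6' : ∀ t : R, a * (w * t) = w * (a * t) := swap_ctx haw
  have ha' : ∀ t : R, a * (a * t) = 0 := fun t => by rw [← mul_assoc, ha, zero_mul]
  have hb' : ∀ t : R, b * (b * t) = 0 := fun t => by rw [← mul_assoc, hb, zero_mul]
  simp only [mul_sub, sub_mul, mul_add, add_mul, mul_neg, neg_mul, mul_one, one_mul, mul_assoc]
  simp only [e1, e1', hax, e2', e3, e3', hbz, e4', e5, e5', haw, e6', ha, ha', hb, hb', hbr,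
    mul_sub, sub_mul, mul_add, add_mul, mul_neg, neg_mul, mul_one, one_mul, mul_zero, zero_mul,
    mul_assoc]
  abel

lemma key_DX (A B C : R) :
    (A * A * B + A * (-(A * B) - B * C)) * C + A * B * (C * C) = 0 := by
  noncomm_ring

lemma key_D2 (A B C : R) :
    -(A * A * B + A * (-(A * B) - B * C)) - ((-(A * B) - B * C) * C + B * (C * C))
      = A * B * C + A * B * C := by
  noncomm_ring

end keys

/-! #### The relations in `NH` -/

section NHrel
variable {k : Type*} [Field k] {n : ℕ}

lemma yy (i j : ℕ) : y k n i * y k n j = y k n j * y k n i := by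
  simpa only [map_mul, y, psi] using RingQuot.mkAlgHom_rel k (Rel.yy (k := k) (n := n) i j)

lemma ypsi {i j : ℕ} (h1 : i ≠ j) (h2 : i ≠ j + 1) :
    y k n i * psi k n j = psi k n j * y k n i := by
  simpa only [map_mul, y, psi] using RingQuot.mkAlgHom_rel k (Rel.ypsi (k := k) (n := n) i j h1 h2)

lemma yp {i : ℕ} (h : i + 1 < n) :
    y k n i * psi k n i = psi k n i * y k n (i+1) + 1 := by
  simpa only [map_mul, map_add, map_one, y, psi] using
    RingQuot.mkAlgHom_rel k (Rel.yp (k := k) i h)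

lemma py {i : ℕ} (h : i + 1 < n) :
    psi k n i * y k n i = y k n (i+1) * psi k n i + 1 := by
  simpa only [map_mul, map_add, map_one, y, psi] using
    RingQuot.mkAlgHom_rel k (Rel.py (k := k) i h)

lemma psisq (i : ℕ) : psi k n i * psi k n i = 0 := by
  simpa only [map_mul, map_zero, y, psi] using RingQuot.mkAlgHom_rel k (Rel.psisq (k := k) (n := n) i)

lemma pfar {i j : ℕ} (h : i + 1 < j) : psi k n i * psi k n j = psi k n j * psi k n i := by
  simpa only [map_mul, y, psi] using RingQuot.mkAlgHom_rel k (Rel.far (k := k) (n := n) i j h)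

lemma braid (i : ℕ) :
    psi k n i * psi k n (i+1) * psi k n i = psi k n (i+1) * psi k n i * psi k n (i+1) := by
  simpa only [map_mul, y, psi] using RingQuot.mkAlgHom_rel k (Rel.braid (k := k) (n := n) i)

lemma ybound {i : ℕ} (h : n ≤ i) : y k n i = 0 := by
  simpa only [map_zero, y, psi] using RingQuot.mkAlgHom_rel k (Rel.ybound (k := k) i h)

lemma pbound {i : ℕ} (h : n ≤ i + 1) : psi k n i = 0 := by
  simpa only [map_zero, y, psi] using RingQuot.mkAlgHom_rel k (Rel.pbound (k := k) i h)

/-! #### The derivation, via the trivial square-zero extension -/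

noncomputable def gval (k : Type*) [Field k] (n : ℕ) :
    ℕ ⊕ ℕ → TrivSqZeroExt (NH k n) (NH k n)
  | .inl i => TrivSqZeroExt.inl (y k n i) + TrivSqZeroExt.inr (y k n i * y k n i)
  | .inr i => TrivSqZeroExt.inl (psi k n i) +
      TrivSqZeroExt.inr (-(y k n i * psi k n i) - psi k n i * y k n (i+1))

noncomputable def F (k : Type*) [Field k] (n : ℕ) :
    FreeAlgebra k (ℕ ⊕ ℕ) →ₐ[k] TrivSqZeroExt (NH k n) (NH k n) :=
  FreeAlgebra.lift k (gval k n)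

lemma F_compat : ∀ ⦃u v : FreeAlgebra k (ℕ ⊕ ℕ)⦄, Rel k n u v → F k n u = F k n v := by
  intro u v h
  induction h with
  | yy i j =>
    refine TrivSqZeroExt.ext ?_ ?_ <;>
      simp only [F, gval, Yf, Pf, map_mul, FreeAlgebra.lift_ι_apply, fst_mul, snd_mul,
        fst_add, snd_add, fst_inl, snd_inl, fst_inr, snd_inr, add_zero, zero_add,
        smul_eq_mul, op_smul_eq_mul]
    · exact yy i j
    · exact key_yy _ _ (yy i j)
  | ypsi i j h1 h2 =>
    refine TrivSqZeroExt.ext ?_ ?_ <;>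
      simp only [F, gval, Yf, Pf, map_mul, FreeAlgebra.lift_ι_apply, fst_mul, snd_mul,
        fst_add, snd_add, fst_inl, snd_inl, fst_inr, snd_inr, add_zero, zero_add,
        smul_eq_mul, op_smul_eq_mul]
    · exact ypsi h1 h2
    · exact key_ypsi _ _ _ _ (ypsi h1 h2) (yy i j) (yy i (j+1))
  | yp i h =>
    refine TrivSqZeroExt.ext ?_ ?_ <;>
      simp only [F, gval, Yf, Pf, map_mul, map_add, map_one, FreeAlgebra.lift_ι_apply,
        fst_mul, snd_mul, fst_add, snd_add, fst_one, snd_one, fst_inl, snd_inl, fst_inr,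
        snd_inr, add_zero, zero_add, smul_eq_mul, op_smul_eq_mul]
    · exact yp h
    · exact key_yp _ _ _
  | py i h =>
    refine TrivSqZeroExt.ext ?_ ?_ <;>
      simp only [F, gval, Yf, Pf, map_mul, map_add, map_one, FreeAlgebra.lift_ι_apply,
        fst_mul, snd_mul, fst_add, snd_add, fst_one, snd_one, fst_inl, snd_inl, fst_inr,
        snd_inr, add_zero, zero_add, smul_eq_mul, op_smul_eq_mul]
    · exact py h
    · exact key_py _ _ _ (yp h) (py h) (yy i (i+1))
  | psisq i =>
    refine TrivSqZeroExt.ext ?_ ?_ <;>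
      simp only [F, gval, Yf, Pf, map_mul, map_zero, FreeAlgebra.lift_ι_apply,
        fst_mul, snd_mul, fst_add, snd_add, fst_zero, snd_zero, fst_inl, snd_inl, fst_inr,
        snd_inr, add_zero, zero_add, smul_eq_mul, op_smul_eq_mul]
    · exact psisq i
    · by_cases h : i + 1 < n
      · exact key_psisq _ _ _ (yp h) (py h) (psisq i)
      · simp [pbound (show n ≤ i + 1 by omega)]
  | far i j h =>
    refine TrivSqZeroExt.ext ?_ ?_ <;>
      simp only [F, gval, Yf, Pf, map_mul, FreeAlgebra.lift_ι_apply, fst_mul, snd_mul,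
        fst_add, snd_add, fst_inl, snd_inl, fst_inr, snd_inr, add_zero, zero_add,
        smul_eq_mul, op_smul_eq_mul]
    · exact pfar h
    · exact key_far _ _ _ _ _ _ (pfar h).symm
        (ypsi (show i ≠ j by omega) (show i ≠ j + 1 by omega)).symm
        (ypsi (show i + 1 ≠ j by omega) (show i + 1 ≠ j + 1 by omega)).symm
        (ypsi (show j ≠ i by omega) (show j ≠ i + 1 by omega))
        (ypsi (show j + 1 ≠ i by omega) (show j + 1 ≠ i + 1 by omega))
  | braid i =>
    refine TrivSqZeroExt.ext ?_ ?_ <;>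
      simp only [F, gval, Yf, Pf, map_mul, FreeAlgebra.lift_ι_apply, fst_mul, snd_mul,
        fst_add, snd_add, fst_inl, snd_inl, fst_inr, snd_inr, add_zero, zero_add,
        smul_eq_mul, op_smul_eq_mul]
    · exact braid i
    · by_cases h : i + 2 < n
      · exact key_braid _ _ _ _ _ (yp (by omega)) (py (by omega))
          (yp (show i + 1 + 1 < n by omega)) (py (show i + 1 + 1 < n by omega))
          (ypsi (show i ≠ i + 1 by omega) (show i ≠ i + 2 by omega))
          (ypsi (show i + 2 ≠ i by omega) (show i + 2 ≠ i + 1 by omega)).symm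
          (psisq i) (psisq (i+1))
          (by simpa only [mul_assoc] using braid (k := k) (n := n) i)
      · simp [pbound (show n ≤ i + 1 + 1 by omega)]
  | ybound i h =>
    refine TrivSqZeroExt.ext ?_ ?_ <;>
      simp only [F, gval, Yf, Pf, map_zero, FreeAlgebra.lift_ι_apply,
        fst_add, snd_add, fst_zero, snd_zero, fst_inl, snd_inl, fst_inr, snd_inr,
        add_zero, zero_add]
    · exact ybound h
    · rw [ybound h, mul_zero]
  | pbound i h =>
    refine TrivSqZeroExt.ext ?_ ?_ <;>
      simp only [F, gval, Yf, Pf, map_zero, FreeAlgebra.lift_ι_apply,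
        fst_add, snd_add, fst_zero, snd_zero, fst_inl, snd_inl, fst_inr, snd_inr,
        add_zero, zero_add]
    · exact pbound h
    · rw [pbound h]; simp

noncomputable def Fbar (k : Type*) [Field k] (n : ℕ) :
    NH k n →ₐ[k] TrivSqZeroExt (NH k n) (NH k n) :=
  RingQuot.liftAlgHom k ⟨F k n, F_compat⟩

lemma Fbar_mk (a : FreeAlgebra k (ℕ ⊕ ℕ)) :
    Fbar k n (RingQuot.mkAlgHom k (Rel k n) a) = F k n a := by
  unfold Fbar
  exact RingQuot.liftAlgHom_mkAlgHom_apply k (F k n) F_compat a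

lemma fst_Fbar (m : NH k n) : (Fbar k n m).fst = m := by
  obtain ⟨a, rfl⟩ := RingQuot.mkAlgHom_surjective k (Rel k n) m
  rw [Fbar_mk]
  induction a using FreeAlgebra.induction with
  | grade0 r => simp [AlgHom.commutes, algebraMap_eq_inl', fst_inl]
  | grade1 s =>
    rcases s with i | i <;>
      simp [F, gval, FreeAlgebra.lift_ι_apply, y, psi, Yf, Pf]
  | mul a b ha hb => simp [map_mul, fst_mul, ha, hb]
  | add a b ha hb => simp [map_add, fst_add, ha, hb]

/-- The derivation, as a `k`-linear map. -/
noncomputable def D (k : Type*) [Field k] (n : ℕ) : NH k n →ₗ[k] NH k n where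
  toFun m := (Fbar k n m).snd
  map_add' a b := by simp [map_add, snd_add]
  map_smul' c a := by simp [map_smul, snd_smul]

lemma D_apply (m : NH k n) : D k n m = (Fbar k n m).snd := rfl

lemma D_leibniz (a b : NH k n) : D k n (a * b) = D k n a * b + a * D k n b := by
  simp only [D_apply, map_mul, snd_mul, smul_eq_mul, op_smul_eq_mul, fst_Fbar]
  rw [add_comm]

lemma D_y (i : ℕ) : D k n (y k n i) = y k n i * y k n i := by
  simp only [D_apply, y, Fbar_mk, F, Yf, FreeAlgebra.lift_ι_apply, gval, snd_add,
    snd_inl, snd_inr, zero_add]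

lemma D_psi (i : ℕ) :
    D k n (psi k n i) = -(y k n i * psi k n i) - psi k n i * y k n (i+1) := by
  simp only [D_apply, psi, Fbar_mk, F, Pf, FreeAlgebra.lift_ι_apply, gval, snd_add,
    snd_inl, snd_inr, zero_add]

lemma D_one : D k n 1 = 0 := by
  have h := D_leibniz (k := k) (n := n) 1 1
  simpa using h

end NHrel

end Stmt11P


/-- Let `p` be a prime and `k` a field of characteristic `p`.  On the
nilHecke algebra `NH_n` over `k`, the derivation `∂` defined on generators by
`∂(y i) = (y i)²` and `∂(ψ i) = −(y i)(ψ i) − (ψ i)(y (i+1))`, extended by the Leibniz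
rule, is well-defined (respects all nilHecke relations) and satisfies `∂^p = 0`: i.e.
there exists a `k`-linear map `D` on `NH_n` satisfying the Leibniz rule, taking the
prescribed values on the generators, with `D^[p] = 0`. -/
theorem stmt_11 (k : Type*) [Field k] (p : ℕ) [Fact p.Prime] [CharP k p] (n : ℕ) :
    ∃ D : Stmt11.NH k n →ₗ[k] Stmt11.NH k n,
      (∀ a b : Stmt11.NH k n, D (a * b) = D a * b + a * D b) ∧
      (∀ i : ℕ, D (Stmt11.y k n i) = Stmt11.y k n i * Stmt11.y k n i) ∧
      (∀ i : ℕ, D (Stmt11.psi k n i) =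
        -(Stmt11.y k n i * Stmt11.psi k n i) - Stmt11.psi k n i * Stmt11.y k n (i+1)) ∧
      (∀ x : Stmt11.NH k n, (⇑D)^[p] x = 0) := by
  classical
  open Stmt11 Stmt11P in
  refine ⟨Stmt11P.D k n, D_leibniz, D_y, D_psi, ?_⟩
  have hp : p.Prime := Fact.out
  have hp1 : 1 ≤ p := hp.one_lt.le.trans' (by omega)
  -- the characteristic kills `p` in `NH`
  have hcast : (p : NH k n) = 0 := by
    rw [← map_natCast (algebraMap k (NH k n)) p, CharP.cast_eq_zero k p, map_zero]
  have hnsmul : ∀ (m : ℕ), p ∣ m → ∀ x : NH k n, m • x = 0 := by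
    intro m hm x
    obtain ⟨c, rfl⟩ := hm
    rw [nsmul_eq_mul, Nat.cast_mul, hcast, zero_mul, zero_mul]
  -- iterates of D kill things eventually
  have hit0 : ∀ (m : ℕ), (⇑(Stmt11P.D k n))^[m] (0 : NH k n) = 0 :=
    fun m => Function.iterate_fixed (by simp) m
  have hshift : ∀ (s t : ℕ) (v : NH k n), (⇑(Stmt11P.D k n))^[s] v = 0 → (⇑(Stmt11P.D k n))^[s + t] v = 0 := by
    intro s t v hv
    rw [add_comm, Function.iterate_add_apply, hv, hit0]
  -- D of powers of y
  have hDy_pow : ∀ (i s : ℕ), (Stmt11P.D k n) ((y k n i) ^ (s+1)) = (s+1) • (y k n i) ^ (s+2) := by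
    intro i s
    induction s with
    | zero => simp [D_y, pow_two, pow_one]
    | succ s ih =>
      have h0 : (y k n i) ^ (s+2) = (y k n i) ^ (s+1) * y k n i := pow_succ _ _
      rw [h0, D_leibniz, ih, D_y, smul_mul_assoc]
      have h1 : y k n i ^ (s + 2) * y k n i = y k n i ^ (s + 3) := (pow_succ _ _).symm
      have h2 : y k n i ^ (s + 1) * (y k n i * y k n i) = y k n i ^ (s + 3) := by
        rw [← mul_assoc, ← pow_succ, ← pow_succ]
      rw [h1, h2, show s + 1 + 2 = s + 3 from by omega, succ_nsmul, succ_nsmul, succ_nsmul]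
  have hity : ∀ (i m : ℕ), (⇑(Stmt11P.D k n))^[m] (y k n i) = m.factorial • (y k n i) ^ (m+1) := by
    intro i m
    induction m with
    | zero => simp
    | succ m ih =>
      rw [Function.iterate_succ_apply', ih, map_nsmul, hDy_pow, smul_smul,
        Nat.factorial_succ, Nat.mul_comm (m+1) m.factorial]
  have hpy : ∀ i : ℕ, (⇑(Stmt11P.D k n))^[p] (y k n i) = 0 := by
    intro i
    rw [hity]
    exact hnsmul _ (Nat.dvd_factorial (by omega) le_rfl) _
  -- D of psi iterated
  have hDX : ∀ i : ℕ, (Stmt11P.D k n) (y k n i * psi k n i * y k n (i+1)) = 0 := by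
    intro i
    rw [D_leibniz, D_leibniz, D_y, D_y, D_psi]
    exact key_DX _ _ _
  have hD2psi : ∀ i : ℕ, (Stmt11P.D k n) ((Stmt11P.D k n) (psi k n i)) =
      y k n i * psi k n i * y k n (i+1) + y k n i * psi k n i * y k n (i+1) := by
    intro i
    rw [D_psi, map_sub, map_neg, D_leibniz, D_leibniz, D_y, D_y, D_psi]
    exact key_D2 _ _ _
  have hppsi : ∀ i : ℕ, (⇑(Stmt11P.D k n))^[p] (psi k n i) = 0 := by
    intro i
    rcases eq_or_lt_of_le hp1 with h1 | h2
    · -- p = 1 impossible (p prime), but handle anyway via p = 1? p prime so p ≥ 2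
      exact absurd h1.symm hp.one_lt.ne'
    · -- p ≥ 2
      rcases eq_or_lt_of_le (show 2 ≤ p from h2) with h2' | h3
      · -- p = 2
        have hp2 : p = 2 := h2'.symm
        subst hp2
        rw [show (2 : ℕ) = 1 + 1 from rfl, Function.iterate_add_apply,
          Function.iterate_one, hD2psi]
        have := hnsmul 2 dvd_rfl (y k n i * psi k n i * y k n (i+1))
        rwa [two_nsmul] at this
      · -- p ≥ 3
        have h3' : 3 ≤ p := h3
        have : (⇑(Stmt11P.D k n))^[3] (psi k n i) = 0 := by
          rw [show (3 : ℕ) = 1 + 1 + 1 from rfl, Function.iterate_add_apply,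
            Function.iterate_add_apply]
          simp only [Function.iterate_one]
          rw [hD2psi, map_add, hDX, add_zero]
        have := hshift 3 (p - 3) (psi k n i) this
        rwa [show 3 + (p - 3) = p by omega] at this
  -- products
  have hmul : ∀ a b : NH k n, (⇑(Stmt11P.D k n))^[p] a = 0 → (⇑(Stmt11P.D k n))^[p] b = 0 → (⇑(Stmt11P.D k n))^[p] (a * b) = 0 := by
    intro a b ha hb
    have hL : ∀ u v : NH k n, (Stmt11P.D k n).toAddMonoidHom (u * v)
        = (Stmt11P.D k n).toAddMonoidHom u * v + u * (Stmt11P.D k n).toAddMonoidHom v := by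
      intro u v; simpa using D_leibniz (k := k) (n := n) u v
    have := Stmt11P.iter_leibniz (Stmt11P.D k n).toAddMonoidHom hL p a b
    rw [LinearMap.toAddMonoidHom_coe] at this
    rw [this]
    refine Finset.sum_eq_zero fun j hj => ?_
    rcases eq_or_ne j 0 with rfl | hj0
    · simp [ha]
    · rcases eq_or_ne j p with rfl | hjp
      · simp [hb]
      · have hjlt : j < p := by
          have := Finset.mem_range.mp hj; omega
        have hdvd : p ∣ p.choose j := hp.dvd_choose_self hj0 hjlt
        exact hnsmul _ hdvd _
  -- additivity of the iterate
  have hadd : ∀ a b : NH k n, (⇑(Stmt11P.D k n))^[p] a = 0 → (⇑(Stmt11P.D k n))^[p] b = 0 → (⇑(Stmt11P.D k n))^[p] (a + b) = 0 := by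
    intro a b ha hb
    rw [← Module.End.pow_apply] at ha hb ⊢
    rw [map_add, ha, hb, add_zero]
  -- scalars
  have halg : ∀ r : k, (⇑(Stmt11P.D k n))^[p] (algebraMap k (NH k n) r) = 0 := by
    intro r
    have h1 : (Stmt11P.D k n) (algebraMap k (NH k n) r) = 0 := by
      rw [Algebra.algebraMap_eq_smul_one, map_smul, D_one, smul_zero]
    have := hshift 1 (p - 1) _ (by simpa using h1)
    rwa [show 1 + (p - 1) = p by omega] at this
  intro x
  obtain ⟨a, rfl⟩ := RingQuot.mkAlgHom_surjective k (Rel k n) x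
  induction a using FreeAlgebra.induction with
  | grade0 r =>
    rw [AlgHom.commutes]
    exact halg r
  | grade1 s =>
    rcases s with i | i
    · exact hpy i
    · exact hppsi i
  | mul a b ha hb => rw [map_mul]; exact hmul _ _ ha hb
  | add a b ha hb => rw [map_add]; exact hadd _ _ ha hb
end

section
/- In the nilHecke algebra NH_n with p-differential ∂ (where ∂(y_i) = y_i², ∂(ψ_i) = −y_i ψ_i − ψ_i y_{i+1}), the idempotent e_n = y_1^{n-1} ⋯ y_n^0 ψ_{w_0} satisfies ∂(e_n) = −e_n · Σ_{i=1}^n (i−1) y_i. Consequently the right ideal e_n NH_n is closed under ∂. -/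
/-! The nilHecke algebra `NH n` over a field `k`, presented by generators
`y i` (for `i < n`) and `ψ i` (for `i + 1 < n`) and the nilHecke relations
(generators out of range are set to zero). Indices are 0-based: `ψ i` crosses
strands `i` and `i+1`. -/

namespace Stmt12

variable (k : Type*) [Field k]

/-- The distinguished generators of the free algebra: `Yf i` will become `y i`,
`Pf i` will become `ψ i`. -/
def Yf (i : ℕ) : FreeAlgebra k (ℕ ⊕ ℕ) := FreeAlgebra.ι k (Sum.inl i)

def Pf (i : ℕ) : FreeAlgebra k (ℕ ⊕ ℕ) := FreeAlgebra.ι k (Sum.inr i)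

/-- The defining relations of the nilHecke algebra `NH_n`. -/
inductive Rel (n : ℕ) : FreeAlgebra k (ℕ ⊕ ℕ) → FreeAlgebra k (ℕ ⊕ ℕ) → Prop
  | yy (i j : ℕ) : Rel n (Yf k i * Yf k j) (Yf k j * Yf k i)
  | ypsi (i j : ℕ) (h1 : i ≠ j) (h2 : i ≠ j + 1) :
      Rel n (Yf k i * Pf k j) (Pf k j * Yf k i)
  | yp (i : ℕ) (h : i + 1 < n) : Rel n (Yf k i * Pf k i) (Pf k i * Yf k (i+1) + 1)
  | py (i : ℕ) (h : i + 1 < n) : Rel n (Pf k i * Yf k i) (Yf k (i+1) * Pf k i + 1)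
  | psisq (i : ℕ) : Rel n (Pf k i * Pf k i) 0
  | far (i j : ℕ) (h : i + 1 < j) : Rel n (Pf k i * Pf k j) (Pf k j * Pf k i)
  | braid (i : ℕ) :
      Rel n (Pf k i * Pf k (i+1) * Pf k i) (Pf k (i+1) * Pf k i * Pf k (i+1))
  | ybound (i : ℕ) (h : n ≤ i) : Rel n (Yf k i) 0
  | pbound (i : ℕ) (h : n ≤ i + 1) : Rel n (Pf k i) 0

/-- The nilHecke algebra on `n` strands. -/
abbrev NH (n : ℕ) := RingQuot (Rel k n)

/-- The dot generator `y i`. -/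
def y (n i : ℕ) : NH k n := RingQuot.mkAlgHom k (Rel k n) (Yf k i)

/-- The crossing generator `ψ i`. -/
def psi (n i : ℕ) : NH k n := RingQuot.mkAlgHom k (Rel k n) (Pf k i)

/-- The product `ψ_L := ψ_{i₁} ⋯ ψ_{i_r}` along a list of indices. -/
def psiList (n : ℕ) (L : List ℕ) : NH k n := (L.map (psi k n)).prod

/-- `ψ_{w₀}`: the nilHecke element of the longest permutation of `S_n`, defined by the
reduced word `(s_0)(s_1 s_0)(s_2 s_1 s_0)⋯(s_{n-2} ⋯ s_0)`. -/
def psiW0 (n : ℕ) : NH k n :=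
  ((List.range (n-1)).map (fun m => psiList k n ((List.range (m+1)).reverse))).prod

/-- The element `e_n = y_0^{n-1} y_1^{n-2} ⋯ y_{n-1}^0 · ψ_{w₀}`. -/
def eIdem (n : ℕ) : NH k n :=
  ((List.range n).map (fun i => y k n i ^ (n - 1 - i))).prod * psiW0 k n

end Stmt12
namespace NHhelper
open Stmt12

variable {k : Type*} [Field k] {n : ℕ}

lemma ryy (i j : ℕ) : y k n i * y k n j = y k n j * y k n i := by
  simpa only [y, map_mul] using RingQuot.mkAlgHom_rel k (Rel.yy (k := k) (n := n) i j)

lemma rypsi {i j : ℕ} (h1 : i ≠ j) (h2 : i ≠ j + 1) :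
    y k n i * psi k n j = psi k n j * y k n i := by
  simpa only [y, psi, map_mul] using RingQuot.mkAlgHom_rel k (Rel.ypsi (k := k) (n := n) i j h1 h2)

lemma ryp {i : ℕ} (h : i + 1 < n) :
    y k n i * psi k n i = psi k n i * y k n (i + 1) + 1 := by
  simpa only [y, psi, map_mul, map_add, map_one] using
    RingQuot.mkAlgHom_rel k (Rel.yp (k := k) i h)

lemma rpy {i : ℕ} (h : i + 1 < n) :
    psi k n i * y k n i = y k n (i + 1) * psi k n i + 1 := by
  simpa only [y, psi, map_mul, map_add, map_one] using
    RingQuot.mkAlgHom_rel k (Rel.py (k := k) i h)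

lemma rpsisq (i : ℕ) : psi k n i * psi k n i = 0 := by
  simpa only [y, psi, map_mul, map_zero] using
    RingQuot.mkAlgHom_rel k (Rel.psisq (k := k) (n := n) i)

lemma rfar {i j : ℕ} (h : i + 1 < j) :
    psi k n i * psi k n j = psi k n j * psi k n i := by
  simpa only [psi, map_mul] using RingQuot.mkAlgHom_rel k (Rel.far (k := k) (n := n) i j h)

lemma rbraid (i : ℕ) :
    psi k n i * psi k n (i + 1) * psi k n i = psi k n (i + 1) * psi k n i * psi k n (i + 1) := by
  simpa only [psi, map_mul] using RingQuot.mkAlgHom_rel k (Rel.braid (k := k) (n := n) i)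

end NHhelper
namespace NHhelper
open Stmt12

variable {k : Type*} [Field k] {n : ℕ}
variable (k n) in
/-- `Bl m = ψ_{m-1} ψ_{m-2} ⋯ ψ_0`. -/
def Bl (m : ℕ) : NH k n := psiList k n (List.range m).reverse

variable (k n) in
/-- `W m = ψ_{w₀}` of `S_m` via the word `(s₀)(s₁s₀)⋯`. -/
def W (m : ℕ) : NH k n := ((List.range (m - 1)).map (fun t => Bl k n (t + 1))).prod

variable (k n) in
def Pm (m : ℕ) : NH k n := ((List.range m).map (y k n)).prod

variable (k n) in
def Ym (m : ℕ) : NH k n := ((List.range m).map (fun i => y k n i ^ (m - 1 - i))).prod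

variable (k n) in
def Em (m : ℕ) : NH k n := Ym k n m * W k n m

variable (k n) in
def Sm (m : ℕ) : NH k n := ∑ i ∈ Finset.range m, i • y k n i

variable (k n) in
def Zm (m : ℕ) : NH k n := ∑ i ∈ Finset.range m, y k n i

variable (k n) in
def Rm : ℕ → NH k n
  | 0 => 0
  | (m + 1) => psi k n m * Rm m - m • Bl k n m

lemma Bl_zero : Bl k n 0 = 1 := rfl

lemma Bl_succ (m : ℕ) : Bl k n (m + 1) = psi k n m * Bl k n m := by
  simp [Bl, psiList, List.range_succ]

lemma W_zero : W k n 0 = 1 := rfl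

lemma W_one : W k n 1 = 1 := rfl

lemma W_succ (m : ℕ) : W k n (m + 1) = W k n m * Bl k n m := by
  match m with
  | 0 => simp [W, Bl, psiList]
  | (j + 1) => simp [W, List.range_succ]

lemma Pm_succ (m : ℕ) : Pm k n (m + 1) = Pm k n m * y k n m := by
  simp [Pm, List.range_succ]

lemma Sm_succ (m : ℕ) : Sm k n (m + 1) = Sm k n m + m • y k n m := by
  simp [Sm, Finset.sum_range_succ]

lemma Zm_succ (m : ℕ) : Zm k n (m + 1) = Zm k n m + y k n m := by
  simp [Zm, Finset.sum_range_succ]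

lemma psiW0_eq : psiW0 k n = W k n n := rfl

lemma cyy (i j : ℕ) : Commute (y k n i) (y k n j) := ryy i j

lemma y_comm_Pm (j m : ℕ) : Commute (y k n j) (Pm k n m) := by
  refine Commute.list_prod_right _ _ (fun x hx => ?_)
  obtain ⟨i, -, rfl⟩ := List.mem_map.mp hx
  exact cyy j i

lemma y_comm_Ym (j m : ℕ) : Commute (y k n j) (Ym k n m) := by
  refine Commute.list_prod_right _ _ (fun x hx => ?_)
  obtain ⟨i, -, rfl⟩ := List.mem_map.mp hx
  exact (cyy j i).pow_right _

end NHhelper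
namespace NHhelper
open Stmt12

variable {k : Type*} [Field k] {n : ℕ}

lemma psi_comm_Bl_far {m j : ℕ} (h : m < j) :
    psi k n j * Bl k n m = Bl k n m * psi k n j := by
  induction m with
  | zero => simp [Bl_zero]
  | succ t ih =>
      rw [Bl_succ, ← mul_assoc, ← rfar h, mul_assoc, ih (Nat.lt_of_succ_lt h), mul_assoc]

lemma y_comm_Bl_far {m j : ℕ} (h : m < j) :
    y k n j * Bl k n m = Bl k n m * y k n j := by
  induction m with
  | zero => simp [Bl_zero]
  | succ t ih =>
      rw [Bl_succ, ← mul_assoc, rypsi (by omega) (by omega), mul_assoc,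
        ih (Nat.lt_of_succ_lt h), mul_assoc]

lemma Bl_mul_psi : ∀ M, ∀ {j : ℕ}, 1 ≤ j → j < M →
    Bl k n M * psi k n j = psi k n (j - 1) * Bl k n M := by
  intro M
  induction M with
  | zero => intro j _ h; omega
  | succ M ih =>
      intro j hj hjM
      rcases Nat.lt_or_ge j M with hlt | hge
      · rw [Bl_succ, mul_assoc, ih hj hlt, ← mul_assoc,
          ← rfar (i := j - 1) (j := M) (by omega), mul_assoc, ← Bl_succ]
      · -- j = M
        have hjM' : j = M := by omega
        subst hjM'
        obtain ⟨i, rfl⟩ : ∃ i, j = i + 1 := ⟨j - 1, by omega⟩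
        rw [Nat.add_sub_cancel, Bl_succ, Bl_succ]
        calc psi k n (i+1) * (psi k n i * Bl k n i) * psi k n (i+1)
            = psi k n (i+1) * psi k n i * (Bl k n i * psi k n (i+1)) := by
              rw [mul_assoc, mul_assoc, mul_assoc]
          _ = psi k n (i+1) * psi k n i * psi k n (i+1) * Bl k n i := by
              rw [← psi_comm_Bl_far (m := i) (j := i + 1) (by omega), ← mul_assoc]
          _ = psi k n i * (psi k n (i+1) * (psi k n i * Bl k n i)) := by
              rw [← rbraid i, mul_assoc, mul_assoc]

lemma Bl_mul_psi0 : ∀ {M : ℕ}, 1 ≤ M → Bl k n M * psi k n 0 = 0 := by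
  intro M
  induction M with
  | zero => omega
  | succ M ih =>
      intro _
      rcases Nat.eq_zero_or_pos M with rfl | hM
      · simp [Bl_succ, Bl_zero, rpsisq]
      · rw [Bl_succ, mul_assoc, ih hM, mul_zero]

lemma W_mul_psi : ∀ m {j : ℕ}, j + 1 < m → W k n m * psi k n j = 0 := by
  intro m
  induction m with
  | zero => intro j h; omega
  | succ m ih =>
      intro j hj
      rcases Nat.eq_zero_or_pos j with rfl | hjpos
      · rw [W_succ, mul_assoc, Bl_mul_psi0 (by omega), mul_zero]
      · rw [W_succ, mul_assoc, Bl_mul_psi m hjpos (by omega), ← mul_assoc,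
          ih (by omega), zero_mul]

variable (k n) in
/-- Left ideal spanned by `ψ_j · a` with `j + 1 < m`. -/
def Imod (m : ℕ) : Submodule k (NH k n) :=
  Submodule.span k {x | ∃ j a, j + 1 < m ∧ x = psi k n j * a}

lemma W_mul_eq_zero {m q : ℕ} (hq : m ≤ q) {x : NH k n} (hx : x ∈ Imod k n m) :
    W k n q * x = 0 := by
  induction hx using Submodule.span_induction with
  | mem x hx =>
      obtain ⟨j, a, hj, rfl⟩ := hx
      rw [← mul_assoc, W_mul_psi q (by omega), zero_mul]
  | zero => rw [mul_zero]
  | add x y _ _ hx hy => rw [mul_add, hx, hy, add_zero]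
  | smul c x _ hx => rw [mul_smul_comm, hx, smul_zero]

lemma psi_mul_Imod {m j : ℕ} (hj : j ≤ m) {x : NH k n} (hx : x ∈ Imod k n m) :
    psi k n j * x ∈ Imod k n (m + 1) := by
  induction hx using Submodule.span_induction with
  | mem x hx =>
      obtain ⟨i, a, hi, rfl⟩ := hx
      rcases Nat.lt_or_ge (i + 1) j with hlt | hge
      · rw [← mul_assoc, ← rfar hlt, mul_assoc]
        exact Submodule.subset_span ⟨i, _, by omega, rfl⟩
      · exact Submodule.subset_span ⟨j, _, by omega, rfl⟩
  | zero => rw [mul_zero]; exact zero_mem _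
  | add x y _ _ hx hy => rw [mul_add]; exact add_mem hx hy
  | smul c x _ hx => rw [mul_smul_comm]; exact Submodule.smul_mem _ _ hx

lemma Bl_mem_Imod {m : ℕ} (hm : 1 ≤ m) : Bl k n m ∈ Imod k n (m + 1) := by
  obtain ⟨t, rfl⟩ : ∃ t, m = t + 1 := ⟨m - 1, by omega⟩
  rw [Bl_succ]
  exact Submodule.subset_span ⟨t, _, by omega, rfl⟩

lemma Rm_mem_Imod : ∀ m, Rm k n m ∈ Imod k n m := by
  intro m
  induction m with
  | zero => exact zero_mem _
  | succ m ih =>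
      show psi k n m * Rm k n m - m • Bl k n m ∈ _
      refine sub_mem (psi_mul_Imod le_rfl ih) ?_
      rcases Nat.eq_zero_or_pos m with rfl | hm
      · rw [zero_smul]; exact zero_mem _
      · exact Submodule.smul_mem _ _ (Bl_mem_Imod hm)

end NHhelper
namespace NHhelper
open Stmt12

variable {k : Type*} [Field k] {n : ℕ}

lemma psi_comm_Sm {j m : ℕ} (h : m ≤ j) :
    psi k n j * Sm k n m = Sm k n m * psi k n j := by
  rw [Sm, Finset.mul_sum, Finset.sum_mul]
  refine Finset.sum_congr rfl fun i hi => ?_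
  have hi' := Finset.mem_range.mp hi
  rw [mul_smul_comm, smul_mul_assoc, ← rypsi (i := i) (j := j) (by omega) (by omega)]

lemma psi_comm_Zm {j m : ℕ} (h : m ≤ j) :
    psi k n j * Zm k n m = Zm k n m * psi k n j := by
  rw [Zm, Finset.mul_sum, Finset.sum_mul]
  refine Finset.sum_congr rfl fun i hi => ?_
  have hi' := Finset.mem_range.mp hi
  rw [← rypsi (i := i) (j := j) (by omega) (by omega)]

lemma Zm_mul_psi {t m : ℕ} (ht : t + 1 < m) (hn : m ≤ n) :
    Zm k n m * psi k n t = psi k n t * Zm k n m := by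
  have hsub : ({t, t + 1} : Finset ℕ) ⊆ Finset.range m := by
    intro x hx
    simp only [Finset.mem_insert, Finset.mem_singleton] at hx
    rcases hx with rfl | rfl <;> simp only [Finset.mem_range] <;> omega
  have key : ∀ i ∈ Finset.range m, i ∉ ({t, t + 1} : Finset ℕ) →
      (y k n i * psi k n t - psi k n t * y k n i) = 0 := by
    intro i _ hi
    simp only [Finset.mem_insert, Finset.mem_singleton, not_or] at hi
    rw [rypsi hi.1 hi.2, sub_self]
  have hzero : ∑ i ∈ Finset.range m,
      (y k n i * psi k n t - psi k n t * y k n i) = 0 := by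
    rw [← Finset.sum_subset hsub key, Finset.sum_pair (by omega : t ≠ t + 1),
      ryp (by omega), rpy (by omega)]
    abel
  have h2 : Zm k n m * psi k n t - psi k n t * Zm k n m = 0 := by
    rw [Zm, Finset.sum_mul, Finset.mul_sum, ← Finset.sum_sub_distrib]
    exact hzero
  exact sub_eq_zero.mp h2

lemma Zm_comm_Bl {j m : ℕ} (hj : j < m) (hn : m ≤ n) :
    Zm k n m * Bl k n j = Bl k n j * Zm k n m := by
  induction j with
  | zero => simp [Bl_zero]
  | succ t ih =>
      rw [Bl_succ, ← mul_assoc, Zm_mul_psi (by omega) hn, mul_assoc,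
        ih (by omega), mul_assoc]

lemma Zm_comm_W {m : ℕ} (hn : m ≤ n) : Commute (Zm k n m) (W k n m) := by
  refine Commute.list_prod_right _ _ (fun x hx => ?_)
  obtain ⟨t, ht, rfl⟩ := List.mem_map.mp hx
  have ht' := List.mem_range.mp ht
  exact Zm_comm_Bl (by omega) hn

lemma Zm_comm_Ym (m j : ℕ) : Commute (Zm k n m) (Ym k n j) := by
  refine Commute.sum_left _ _ _ (fun i _ => y_comm_Ym i j)

lemma Zm_comm_Pm (m j : ℕ) : Commute (Zm k n m) (Pm k n j) := by
  refine Commute.sum_left _ _ _ (fun i _ => y_comm_Pm i j)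

lemma Zm_comm_Em {m : ℕ} (hn : m ≤ n) : Zm k n m * Em k n m = Em k n m * Zm k n m := by
  rw [Em, ← mul_assoc, (Zm_comm_Ym m m).eq, mul_assoc, (Zm_comm_W hn).eq, mul_assoc]

lemma Em_mul_Rm (m : ℕ) : Em k n m * Rm k n m = 0 := by
  rw [Em, mul_assoc, W_mul_eq_zero le_rfl (Rm_mem_Imod m), mul_zero]

lemma Pm_mul_prod_pow (a : ℕ → ℕ) : ∀ m,
    Pm k n m * ((List.range m).map fun i => y k n i ^ a i).prod
      = ((List.range m).map fun i => y k n i ^ (a i + 1)).prod := by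
  intro m
  induction m with
  | zero => simp [Pm]
  | succ m ih =>
      have hc : Commute (y k n m) (((List.range m).map fun i => y k n i ^ a i).prod) := by
        refine Commute.list_prod_right _ _ (fun x hx => ?_)
        obtain ⟨i, -, rfl⟩ := List.mem_map.mp hx
        exact (cyy m i).pow_right _
      rw [Pm_succ, List.range_succ, List.map_append, List.map_append,
        List.prod_append, List.prod_append, List.map_cons, List.map_nil,
        List.prod_cons, List.prod_nil, List.map_cons, List.map_nil,
        List.prod_cons, List.prod_nil, mul_one, mul_one]
      calc Pm k n m * y k n m *
            (((List.range m).map fun i => y k n i ^ a i).prod * y k n m ^ a m)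
          = Pm k n m * (y k n m * ((List.range m).map fun i => y k n i ^ a i).prod)
              * y k n m ^ a m := by rw [mul_assoc, mul_assoc, mul_assoc]
        _ = Pm k n m * (((List.range m).map fun i => y k n i ^ a i).prod)
              * (y k n m * y k n m ^ a m) := by rw [hc.eq, mul_assoc, mul_assoc, mul_assoc]
        _ = ((List.range m).map fun i => y k n i ^ (a i + 1)).prod * y k n m ^ (a m + 1) := by
              rw [ih, ← pow_succ']

lemma Ym_succ (m : ℕ) : Ym k n (m + 1) = Pm k n m * Ym k n m := by
  have h1 : Ym k n (m + 1) = ((List.range m).map fun i => y k n i ^ (m - i)).prod := by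
    show ((List.range (m+1)).map fun i => y k n i ^ (m + 1 - 1 - i)).prod = _
    rw [List.range_succ, List.map_append, List.prod_append, List.map_cons, List.map_nil,
      List.prod_cons, List.prod_nil]
    simp [Nat.sub_self]
  rw [h1, Ym, Pm_mul_prod_pow]
  refine congrArg List.prod (List.map_congr_left fun i hi => ?_)
  have := List.mem_range.mp hi
  congr 1
  omega

lemma Em_zero : Em k n 0 = 1 := by
  simp [Em, Ym, W]

lemma Em_succ (m : ℕ) : Em k n (m + 1) = Pm k n m * Em k n m * Bl k n m := by
  rw [Em, Em, Ym_succ, W_succ, mul_assoc, mul_assoc, mul_assoc]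

end NHhelper
namespace NHhelper
open Stmt12

variable {k : Type*} [Field k] {n : ℕ}

lemma key_step {R : Type*} [Ring R] (A P S Z T u v r r' : R) (c : ℕ)
    (h1 : P * S = S * P) (h2 : P * Z = Z * P) (h3 : v * A = A * v)
    (h4 : u * P = P * v + 1)
    (hT : T = S + c • u) (hr' : r' = P * r - c • A) :
    (-(u * P) - P * v) * A + P * ((S - Z) * A - A * T + r)
      = (T - (Z + u)) * (P * A) - (P * A) * (T + (c + 1) • v) + r' := by
  subst hT hr'
  have e1 : ∀ x : R, u * (P * x) = P * (v * x) + x := fun x => by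
    rw [← mul_assoc, h4, add_mul, one_mul, mul_assoc]
  have e2 : ∀ x : R, P * (S * x) = S * (P * x) := fun x => by
    rw [← mul_assoc, h1, mul_assoc]
  have e3 : ∀ x : R, P * (Z * x) = Z * (P * x) := fun x => by
    rw [← mul_assoc, h2, mul_assoc]
  have e4 : ∀ x : R, v * (A * x) = A * (v * x) := fun x => by
    rw [← mul_assoc, h3, mul_assoc]
  simp only [sub_mul, mul_sub, add_mul, mul_add, smul_mul_assoc, mul_smul_comm,
    neg_mul, mul_neg, mul_assoc, e1, e2, e3, e4, h4, h1, h2, h3, smul_add, smul_sub,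
    add_smul, one_smul, one_mul]
  abel

lemma key_step2 {R : Type*} [Ring R] (p e b S Z T r : R)
    (q1 : Z * p = p * Z) (q2 : Z * e = e * Z) (q3 : e * r = 0) :
    (Z * p * e + p * -(e * S)) * b + p * e * ((S - Z) * b - b * T + r)
      = -(p * e * b * T) := by
  have e2 : ∀ x : R, Z * (p * x) = p * (Z * x) := fun x => by
    rw [← mul_assoc, q1, mul_assoc]
  have e3 : ∀ x : R, Z * (e * x) = e * (Z * x) := fun x => by
    rw [← mul_assoc, q2, mul_assoc]
  simp only [sub_mul, mul_sub, add_mul, mul_add, neg_mul, mul_neg, mul_assoc,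
    e2, e3, q3, q1, q2, mul_zero]
  abel

lemma key_step3 {R : Type*} [Ring R] (e S w z : R) :
    -(e * S) * z + e * w = e * (-(S * z) + w) := by noncomm_ring

section Differential

variable (D : NH k n →ₗ[k] NH k n)
variable (hLeib : ∀ a b : NH k n, D (a * b) = D a * b + a * D b)
variable (hy : ∀ i : ℕ, D (y k n i) = y k n i * y k n i)
variable (hpsi : ∀ i : ℕ, D (psi k n i) =
    -(y k n i * psi k n i) - psi k n i * y k n (i + 1))

include hLeib in
lemma D_one : D 1 = 0 := by
  have h := hLeib 1 1
  rw [one_mul, mul_one, one_mul] at h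
  exact (left_eq_add.mp h)

include hLeib hy in
lemma D_Pm : ∀ m, D (Pm k n m) = Zm k n m * Pm k n m := by
  intro m
  induction m with
  | zero =>
      have h0 : Pm k n 0 = 1 := rfl
      rw [h0, D_one D hLeib]
      simp [Zm]
  | succ m ih =>
      rw [Pm_succ, hLeib, ih, hy m, Zm_succ,
        show Pm k n m * (y k n m * y k n m) = y k n m * Pm k n m * y k n m by
          rw [← mul_assoc, ← (y_comm_Pm m m).eq]]
      noncomm_ring

lemma Rm_succ (m : ℕ) :
    Rm k n (m + 1) = psi k n m * Rm k n m - m • Bl k n m := rfl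

include hLeib hy hpsi in
lemma D_Bl : ∀ m, m < n →
    D (Bl k n m) = (Sm k n m - Zm k n m) * Bl k n m - Bl k n m * Sm k n (m + 1)
      + Rm k n m := by
  intro m
  induction m with
  | zero =>
      intro _
      rw [Bl_zero, D_one D hLeib]
      simp [Sm, Zm, Rm]
  | succ m ih =>
      intro hm
      rw [Bl_succ, hLeib, hpsi m, ih (by omega), Zm_succ,
        show Sm k n (m + 2) = Sm k n (m + 1) + (m + 1) • y k n (m + 1) from Sm_succ (m+1)]
      exact key_step (Bl k n m) (psi k n m) (Sm k n m) (Zm k n m) (Sm k n (m + 1))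
        (y k n m) (y k n (m + 1)) (Rm k n m) (Rm k n (m + 1)) m
        (psi_comm_Sm le_rfl) (psi_comm_Zm le_rfl)
        (y_comm_Bl_far (Nat.lt_succ_self m)) (ryp hm) (Sm_succ m) (Rm_succ m)

include hLeib hy hpsi in
lemma D_Em : ∀ m, m ≤ n → D (Em k n m) = -(Em k n m * Sm k n m) := by
  intro m
  induction m with
  | zero =>
      intro _
      rw [Em_zero, D_one D hLeib]
      simp [Sm]
  | succ m ih =>
      intro hm
      rw [Em_succ, hLeib, hLeib, D_Pm D hLeib hy, ih (by omega),
        D_Bl D hLeib hy hpsi m (by omega)]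
      exact key_step2 (Pm k n m) (Em k n m) (Bl k n m) (Sm k n m) (Zm k n m)
        (Sm k n (m + 1)) (Rm k n m)
        ((Zm_comm_Pm m m).eq) (Zm_comm_Em (by omega)) (Em_mul_Rm m)

end Differential

end NHhelper

open Stmt12 in
/-- In the nilHecke algebra `NH_n` over a field of characteristic `p`,
with the `p`-differential `∂` (where `∂(y i) = (y i)²`, `∂(ψ i) = −(y i)(ψ i) − (ψ i)(y (i+1))`),
the idempotent `e_n = y_0^{n-1} ⋯ y_{n-1}^0 ψ_{w₀}` satisfies
`∂(e_n) = −e_n · Σ_{i<n} i • y_i` (0-based indexing of the paper's `Σ (i−1) y_i`).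
Consequently the right ideal `e_n · NH_n` is closed under `∂`. -/
theorem stmt_12 (k : Type*) [Field k] (p : ℕ) [Fact p.Prime] [CharP k p] (n : ℕ)
    (D : NH k n →ₗ[k] NH k n)
    (hLeib : ∀ a b : NH k n, D (a * b) = D a * b + a * D b)
    (hy : ∀ i : ℕ, D (y k n i) = y k n i * y k n i)
    (hpsi : ∀ i : ℕ, D (psi k n i) =
      -(y k n i * psi k n i) - psi k n i * y k n (i+1)) :
    D (eIdem k n) = -(eIdem k n * ∑ i ∈ Finset.range n, i • y k n i) ∧
    ∀ z : NH k n, ∃ u : NH k n, D (eIdem k n * z) = eIdem k n * u := by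
  have heq : eIdem k n = NHhelper.Em k n n := rfl
  have hS : (∑ i ∈ Finset.range n, i • y k n i) = NHhelper.Sm k n n := rfl
  have h1 : D (eIdem k n) = -(eIdem k n * ∑ i ∈ Finset.range n, i • y k n i) := by
    rw [heq, hS]
    exact NHhelper.D_Em D hLeib hy hpsi n le_rfl
  refine ⟨h1, fun z => ⟨-(NHhelper.Sm k n n * z) + D z, ?_⟩⟩
  rw [hLeib, h1, hS]
  exact NHhelper.key_step3 _ _ _ _
end

section
/- In the nilHecke algebra NH_n with p-differential ∂, the element e_n' = ψ_{w_0} · y_1^0 y_2^1 ⋯ y_n^{n-1} satisfies ∂(e_n') = −Σ_{i=1}^n (n−i) y_i · e_n'. -/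
/-! The nilHecke algebra `NH n` over a field `k`, presented by generators
`y i` (for `i < n`) and `ψ i` (for `i + 1 < n`) and the nilHecke relations
(generators out of range are set to zero). Indices are 0-based: `ψ i` crosses
strands `i` and `i+1`. -/

namespace Stmt13

variable (k : Type*) [Field k]

/-- The distinguished generators of the free algebra: `Yf i` will become `y i`,
`Pf i` will become `ψ i`. -/
def Yf (i : ℕ) : FreeAlgebra k (ℕ ⊕ ℕ) := FreeAlgebra.ι k (Sum.inl i)

def Pf (i : ℕ) : FreeAlgebra k (ℕ ⊕ ℕ) := FreeAlgebra.ι k (Sum.inr i)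

/-- The defining relations of the nilHecke algebra `NH_n`. -/
inductive Rel (n : ℕ) : FreeAlgebra k (ℕ ⊕ ℕ) → FreeAlgebra k (ℕ ⊕ ℕ) → Prop
  | yy (i j : ℕ) : Rel n (Yf k i * Yf k j) (Yf k j * Yf k i)
  | ypsi (i j : ℕ) (h1 : i ≠ j) (h2 : i ≠ j + 1) :
      Rel n (Yf k i * Pf k j) (Pf k j * Yf k i)
  | yp (i : ℕ) (h : i + 1 < n) : Rel n (Yf k i * Pf k i) (Pf k i * Yf k (i+1) + 1)
  | py (i : ℕ) (h : i + 1 < n) : Rel n (Pf k i * Yf k i) (Yf k (i+1) * Pf k i + 1)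
  | psisq (i : ℕ) : Rel n (Pf k i * Pf k i) 0
  | far (i j : ℕ) (h : i + 1 < j) : Rel n (Pf k i * Pf k j) (Pf k j * Pf k i)
  | braid (i : ℕ) :
      Rel n (Pf k i * Pf k (i+1) * Pf k i) (Pf k (i+1) * Pf k i * Pf k (i+1))
  | ybound (i : ℕ) (h : n ≤ i) : Rel n (Yf k i) 0
  | pbound (i : ℕ) (h : n ≤ i + 1) : Rel n (Pf k i) 0

/-- The nilHecke algebra on `n` strands. -/
abbrev NH (n : ℕ) := RingQuot (Rel k n)

/-- The dot generator `y i`. -/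
def y (n i : ℕ) : NH k n := RingQuot.mkAlgHom k (Rel k n) (Yf k i)

/-- The crossing generator `ψ i`. -/
def psi (n i : ℕ) : NH k n := RingQuot.mkAlgHom k (Rel k n) (Pf k i)

/-- The product `ψ_L := ψ_{i₁} ⋯ ψ_{i_r}` along a list of indices. -/
def psiList (n : ℕ) (L : List ℕ) : NH k n := (L.map (psi k n)).prod

/-- `ψ_{w₀}`: the nilHecke element of the longest permutation of `S_n`, defined by the
reduced word `(s_0)(s_1 s_0)(s_2 s_1 s_0)⋯(s_{n-2} ⋯ s_0)`. -/
def psiW0 (n : ℕ) : NH k n :=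
  ((List.range (n-1)).map (fun m => psiList k n ((List.range (m+1)).reverse))).prod

/-- The element `e_n = y_0^{n-1} y_1^{n-2} ⋯ y_{n-1}^0 · ψ_{w₀}`. -/
def eIdem (n : ℕ) : NH k n :=
  ((List.range n).map (fun i => y k n i ^ (n - 1 - i))).prod * psiW0 k n



/-- The quasi-idempotent `e_n' = ψ_{w₀} · y_0^0 y_1^1 ⋯ y_{n-1}^{n-1}`. -/
def ePrime (n : ℕ) : NH k n :=
  psiW0 k n * ((List.range n).map (fun i => y k n i ^ i)).prod

end Stmt13

namespace Stmt13
section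
variable {k : Type*} [Field k] {n : ℕ}

local notation "Y" => y k n
local notation "P" => psi k n

lemma rel_eq {a b : FreeAlgebra k (ℕ ⊕ ℕ)} (h : Rel k n a b) :
    RingQuot.mkAlgHom k (Rel k n) a = RingQuot.mkAlgHom k (Rel k n) b :=
  RingQuot.mkAlgHom_rel k h

lemma yy_comm (i j : ℕ) : Y i * Y j = Y j * Y i := by
  simpa [y, map_mul] using rel_eq (Rel.yy (k := k) (n := n) i j)

lemma y_psi_comm {i j : ℕ} (h1 : i ≠ j) (h2 : i ≠ j + 1) : Y i * P j = P j * Y i := by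
  simpa [y, psi, map_mul] using rel_eq (Rel.ypsi (k := k) (n := n) i j h1 h2)

lemma psi_y_comm {i j : ℕ} (h1 : i ≠ j) (h2 : i ≠ j + 1) : P j * Y i = Y i * P j :=
  (y_psi_comm h1 h2).symm

lemma yp (i : ℕ) (h : i + 1 < n) : Y i * P i = P i * Y (i+1) + 1 := by
  simpa [y, psi, map_mul, map_add, map_one] using rel_eq (Rel.yp (k := k) i h)

lemma py (i : ℕ) (h : i + 1 < n) : P i * Y i = Y (i+1) * P i + 1 := by
  simpa [y, psi, map_mul, map_add, map_one] using rel_eq (Rel.py (k := k) i h)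

lemma py' (i : ℕ) (h : i + 1 < n) : Y (i+1) * P i = P i * Y i - 1 := by
  rw [eq_sub_iff_add_eq, ← py i h]

lemma yp' (i : ℕ) (h : i + 1 < n) : P i * Y (i+1) = Y i * P i - 1 := by
  rw [eq_sub_iff_add_eq, ← yp i h]

lemma psisq (i : ℕ) : P i * P i = 0 := by
  simpa [psi, map_mul] using rel_eq (Rel.psisq (k := k) (n := n) i)

lemma psi_far {i j : ℕ} (h : i + 1 < j) : P i * P j = P j * P i := by
  simpa [psi, map_mul] using rel_eq (Rel.far (k := k) (n := n) i j h)

lemma braid (i : ℕ) : P i * P (i+1) * P i = P (i+1) * P i * P (i+1) := by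
  simpa [psi, map_mul] using rel_eq (Rel.braid (k := k) (n := n) i)

lemma mul_neg' (a b : NH k n) : a * -b = -(a * b) := by
  have h : a * -b + a * b = 0 := by rw [← mul_add, neg_add_cancel, mul_zero]
  exact eq_neg_of_add_eq_zero_left h

lemma neg_mul' (a b : NH k n) : -a * b = -(a * b) := by
  have h : -a * b + a * b = 0 := by rw [← add_mul, neg_add_cancel, zero_mul]
  exact eq_neg_of_add_eq_zero_left h

end
end Stmt13
namespace Stmt13
variable (k : Type*) [Field k] (n : ℕ)

/-- `blk m = ψ_m ψ_{m-1} ⋯ ψ_0`. -/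
def blk : ℕ → NH k n
  | 0 => psi k n 0
  | m+1 => psi k n (m+1) * blk m

/-- `blk' m = ψ_m ψ_{m-1} ⋯ ψ_1`. -/
def blk' : ℕ → NH k n
  | 0 => 1
  | m+1 => psi k n (m+1) * blk' m

/-- remainder terms. -/
def rem : ℕ → NH k n
  | 0 => 0
  | m+1 => psi k n (m+1) * rem m + blk k n m

/-- `Wm m` is the longest nilHecke word of `S_{m+1}`. -/
def Wm : ℕ → NH k n
  | 0 => 1
  | m+1 => Wm m * blk k n m

section
variable {k n}
local notation "Y" => y k n
local notation "P" => psi k n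
local notation "β" => blk k n
local notation "W" => Wm k n

lemma psiList_cons (a : ℕ) (l : List ℕ) :
    psiList k n (a :: l) = P a * psiList k n l := by simp [psiList]

lemma psiList_blk (m : ℕ) : psiList k n ((List.range (m+1)).reverse) = β m := by
  induction m with
  | zero => simp [psiList, blk, List.range_succ]
  | succ m ih =>
      rw [List.range_succ, List.reverse_append]
      simpa [psiList_cons, blk] using congrArg (fun z => P (m+1) * z) ih

lemma psiW0_eq : psiW0 k n = W (n-1) := by
  suffices h : ∀ t, ((List.range t).map
      (fun m => psiList k n ((List.range (m+1)).reverse))).prod = W t by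
    exact h (n-1)
  intro t
  induction t with
  | zero => simp [Wm]
  | succ t ih =>
      rw [List.range_succ]
      simp only [psiList_blk] at ih ⊢
      simp [Wm, ih]

end
end Stmt13
namespace Stmt13
section
variable {k : Type*} [Field k] {n : ℕ}
local notation "Y" => y k n
local notation "P" => psi k n
local notation "β" => blk k n
local notation "W" => Wm k n

lemma blk_psi_far {s t : ℕ} (h : t + 2 ≤ s) : β t * P s = P s * β t := by
  induction t with
  | zero => exact psi_far (by omega)
  | succ t ih =>
      show P (t+1) * β t * P s = _
      rw [mul_assoc, ih (by omega), ← mul_assoc, psi_far (by omega), mul_assoc]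
      rfl

lemma y_blk_far {s t : ℕ} (h : t + 2 ≤ s) : Y s * β t = β t * Y s := by
  induction t with
  | zero => exact y_psi_comm (by omega) (by omega)
  | succ t ih =>
      show Y s * (P (t+1) * β t) = _
      rw [← mul_assoc, y_psi_comm (by omega) (by omega), mul_assoc, ih (by omega),
        ← mul_assoc]
      rfl

lemma blk_psi_zero (m : ℕ) : β m * P 0 = 0 := by
  induction m with
  | zero => exact psisq 0
  | succ m ih => show P (m+1) * β m * P 0 = 0; rw [mul_assoc, ih, mul_zero]

lemma blk_psi {m j : ℕ} (h : j < m) : β m * P (j+1) = P j * β m := by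
  induction m generalizing j with
  | zero => omega
  | succ m ih =>
      rcases Nat.lt_succ_iff_lt_or_eq.mp h with h' | h'
      · show P (m+1) * β m * P (j+1) = _
        rw [mul_assoc, ih h', ← mul_assoc,
          show P (m+1) * P j = P j * P (m+1) from (psi_far (by omega)).symm, mul_assoc]
        rfl
      · -- j = m : use the braid relation
        subst h'
        cases j with
        | zero =>
            show P 1 * P 0 * P 1 = P 0 * (P 1 * P 0)
            rw [← mul_assoc]
            exact (braid 0).symm
        | succ t =>
            show P (t+2) * (P (t+1) * β t) * P (t+2) = P (t+1) * (P (t+2) * (P (t+1) * β t))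
            have hb : P (t+1) * P (t+2) * P (t+1) = P (t+2) * P (t+1) * P (t+2) := braid (t+1)
            calc P (t+2) * (P (t+1) * β t) * P (t+2)
                = P (t+2) * P (t+1) * (β t * P (t+2)) := by rw [mul_assoc, mul_assoc, mul_assoc]
              _ = P (t+2) * P (t+1) * P (t+2) * β t := by
                    rw [blk_psi_far (by omega), ← mul_assoc]
              _ = P (t+1) * P (t+2) * P (t+1) * β t := by rw [hb]
              _ = P (t+1) * (P (t+2) * (P (t+1) * β t)) := by rw [mul_assoc, mul_assoc]

lemma Wm_psi {m j : ℕ} (h : j < m) : W m * P j = 0 := by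
  induction m generalizing j with
  | zero => omega
  | succ m ih =>
      show W m * β m * P j = 0
      cases j with
      | zero => rw [mul_assoc, blk_psi_zero, mul_zero]
      | succ j' => rw [mul_assoc, blk_psi (by omega), ← mul_assoc, ih (by omega), zero_mul]

lemma kill_rem (m : ℕ) (x : NH k n) (hx : ∀ j, j < m → x * P j = 0) :
    x * rem k n m = 0 := by
  induction m generalizing x with
  | zero => show x * 0 = 0; exact mul_zero x
  | succ m ih =>
      show x * (P (m+1) * rem k n m + β m) = 0
      rw [mul_add, ← mul_assoc, ih (x * P (m+1)) ?_, zero_add]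
      · cases m with
        | zero => show x * P 0 = 0; exact hx 0 (by omega)
        | succ t => show x * (P (t+1) * β t) = 0
                    rw [← mul_assoc, hx (t+1) (by omega), zero_mul]
      · intro j hj
        rw [mul_assoc, ← psi_far (show j + 1 < m + 1 by omega), ← mul_assoc,
          hx j (by omega), zero_mul]

end
end Stmt13
namespace Stmt13
section
variable {k : Type*} [Field k] {n : ℕ}
local notation "Y" => y k n
local notation "P" => psi k n
local notation "β" => blk k n
local notation "W" => Wm k n

lemma sum_mul_of_comm {s : Finset ℕ} (f : ℕ → NH k n) (b : NH k n)
    (h : ∀ j ∈ s, f j * b = b * f j) :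
    (∑ j ∈ s, f j) * b = b * ∑ j ∈ s, f j := by
  rw [Finset.sum_mul, Finset.mul_sum]; exact Finset.sum_congr rfl h

lemma D_one (D : NH k n →ₗ[k] NH k n)
    (hLeib : ∀ a b : NH k n, D (a * b) = D a * b + a * D b) : D 1 = 0 := by
  have := hLeib 1 1
  simp only [one_mul, mul_one] at this
  have h2 : D 1 + 0 = D 1 + D 1 := by rw [add_zero]; exact this
  exact (add_left_cancel h2).symm

lemma Dblk (D : NH k n →ₗ[k] NH k n)
    (hLeib : ∀ a b : NH k n, D (a * b) = D a * b + a * D b)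
    (hpsi : ∀ i : ℕ, D (P i) = -(Y i * P i) - P i * Y (i+1)) (m : ℕ) :
    D (β m) = -((∑ j ∈ Finset.range (m+1), Y j) * β m)
      - β m * (∑ j ∈ Finset.range (m+1), Y (j+1)) := by
  induction m with
  | zero => simpa [blk, Finset.sum_range_one] using hpsi 0
  | succ m ih =>
      have hb : β (m+1) = P (m+1) * β m := rfl
      have hc1 : ∀ x : NH k n,
          P (m+1) * ((∑ j ∈ Finset.range (m+1), Y j) * x)
            = (∑ j ∈ Finset.range (m+1), Y j) * (P (m+1) * x) := by
        intro x
        rw [← mul_assoc, ← mul_assoc,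
          sum_mul_of_comm (fun j => Y j) (P (m+1))
            (fun j hj => y_psi_comm (by simp at hj; omega) (by simp at hj; omega))]
      have hc2 : Y (m+1+1) * β m = β m * Y (m+1+1) := y_blk_far (by omega)
      have hS2 : (∑ j ∈ Finset.range (m+1+1), Y j)
          = (∑ j ∈ Finset.range (m+1), Y j) + Y (m+1) :=
        Finset.sum_range_succ _ _
      have hS2' : (∑ j ∈ Finset.range (m+1+1), Y (j+1))
          = (∑ j ∈ Finset.range (m+1), Y (j+1)) + Y (m+1+1) :=
        Finset.sum_range_succ _ _
      have eA : P (m+1) * (-((∑ j ∈ Finset.range (m+1), Y j) * β m)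
            - β m * (∑ j ∈ Finset.range (m+1), Y (j+1)))
          = -((∑ j ∈ Finset.range (m+1), Y j) * (P (m+1) * β m))
            - P (m+1) * β m * (∑ j ∈ Finset.range (m+1), Y (j+1)) := by
        simp only [mul_sub, mul_neg', ← mul_assoc]
        rw [show P (m+1) * (∑ j ∈ Finset.range (m+1), Y j)
            = (∑ j ∈ Finset.range (m+1), Y j) * P (m+1) from
          (sum_mul_of_comm (fun j => Y j) (P (m+1))
            (fun j hj => y_psi_comm (by simp at hj; omega) (by simp at hj; omega))).symm]
      have eB : (-(Y (m+1) * P (m+1)) - P (m+1) * Y (m+1+1)) * β m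
          = -(Y (m+1) * (P (m+1) * β m)) - P (m+1) * β m * Y (m+1+1) := by
        simp only [sub_mul, neg_mul', mul_assoc, hc2]
      rw [hb, hLeib (P (m+1)) (β m), hpsi (m+1), ih, hS2, hS2', eA, eB, add_mul, mul_add]
      abel
end
end Stmt13
namespace Stmt13
section
variable {k : Type*} [Field k] {n : ℕ}
local notation "Y" => y k n
local notation "P" => psi k n
local notation "β" => blk k n
local notation "W" => Wm k n

lemma y0_blk (m : ℕ) (h : 1 < n) : Y 0 * β m = β m * Y 1 + blk' k n m := by
  induction m with
  | zero => exact yp 0 h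
  | succ m ih =>
      show Y 0 * (P (m+1) * β m) = P (m+1) * β m * Y 1 + blk' k n (m+1)
      rw [← mul_assoc, y_psi_comm (by omega) (by omega), mul_assoc, ih, mul_add]
      show _ = P (m+1) * β m * Y 1 + P (m+1) * blk' k n m
      rw [mul_assoc]

lemma y_blk_mid (m j : ℕ) (hjm : j + 1 ≤ m) (hb : j + 2 < n) :
    ∃ r, Y (j+1) * β m = β m * Y (j+2) + P j * r := by
  induction m generalizing j with
  | zero => omega
  | succ m ih =>
      rcases Nat.lt_or_ge j m with h' | h'
      · -- j + 1 ≤ m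
        obtain ⟨r, hr⟩ := ih j (by omega) hb
        refine ⟨P (m+1) * r, ?_⟩
        show Y (j+1) * (P (m+1) * β m) = P (m+1) * β m * Y (j+2) + P j * (P (m+1) * r)
        rw [← mul_assoc, y_psi_comm (by omega) (by omega), mul_assoc, hr, mul_add,
          ← mul_assoc, ← mul_assoc, ← psi_far (show j+1 < m+1 by omega), mul_assoc, mul_assoc]
      · -- j = m
        have hj : j = m := by omega
        subst hj
        refine ⟨(match j with | 0 => 1 | t+1 => β t), ?_⟩
        show Y (j+1) * (P (j+1) * β j) = P (j+1) * β j * Y (j+2) + _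
        rw [← mul_assoc, yp (j+1) hb, add_mul, one_mul, mul_assoc,
          y_blk_far (show j + 2 ≤ j + 2 by omega), ← mul_assoc]
        congr 1
        cases j with
        | zero => show β 0 = P 0 * 1; rw [mul_one]; rfl
        | succ t => rfl

lemma yTop_blk (m : ℕ) (h : m + 1 < n) :
    Y (m+1) * β m = β m * Y 0 - blk' k n m - rem k n m := by
  induction m with
  | zero =>
      show Y 1 * β 0 = β 0 * Y 0 - 1 - 0
      rw [sub_zero]; exact py' 0 h
  | succ m ih =>
      show Y (m+2) * (P (m+1) * β m) = P (m+1) * β m * Y 0 - blk' k n (m+1) - rem k n (m+1)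
      rw [← mul_assoc, py' (m+1) h, sub_mul, one_mul, mul_assoc, ih (by omega)]
      show _ = P (m+1) * β m * Y 0 - P (m+1) * blk' k n m - (P (m+1) * rem k n m + β m)
      rw [mul_sub, mul_sub, ← mul_assoc]
      abel

lemma sum_y_psi (i s : ℕ) (h : i + 1 < n) (hs : i + 2 ≤ s) :
    (∑ j ∈ Finset.range s, Y j) * P i = P i * ∑ j ∈ Finset.range s, Y j := by
  induction s, hs using Nat.le_induction with
  | base =>
      rw [Finset.sum_range_succ, Finset.sum_range_succ]
      rw [add_mul, add_mul, mul_add, mul_add,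
        sum_mul_of_comm (fun j => Y j) (P i)
          (fun j hj => y_psi_comm (by simp at hj; omega) (by simp at hj; omega)),
        yp i h, py' i h]
      abel
  | succ s hs ih =>
      rw [Finset.sum_range_succ, add_mul, mul_add, ih,
        y_psi_comm (by omega) (by omega)]

lemma sum_y_blk (t s : ℕ) (h : t + 1 < n) (hs : t + 2 ≤ s) :
    (∑ j ∈ Finset.range s, Y j) * β t = β t * ∑ j ∈ Finset.range s, Y j := by
  induction t with
  | zero => exact sum_y_psi 0 s h hs
  | succ t ih =>
      show _ * (P (t+1) * β t) = P (t+1) * β t * _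
      rw [← mul_assoc, sum_y_psi (t+1) s h hs, mul_assoc, ih (by omega) (by omega),
        ← mul_assoc]

lemma sum_y_Wm (m s : ℕ) (hm : m < n) (hs : m + 1 ≤ s) :
    (∑ j ∈ Finset.range s, Y j) * W m = W m * ∑ j ∈ Finset.range s, Y j := by
  induction m with
  | zero => show _ * 1 = 1 * _; rw [mul_one, one_mul]
  | succ m ih =>
      show _ * (W m * β m) = W m * β m * _
      rw [← mul_assoc, ih (by omega) (by omega), mul_assoc,
        sum_y_blk m s (by omega) (by omega), ← mul_assoc]

lemma y_Wm_far (s m : ℕ) (h : m < s) : Y s * W m = W m * Y s := by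
  induction m with
  | zero => show Y s * 1 = 1 * Y s; rw [mul_one, one_mul]
  | succ m ih =>
      show Y s * (W m * β m) = W m * β m * Y s
      rw [← mul_assoc, ih (by omega), mul_assoc, y_blk_far (by omega), ← mul_assoc]

end
end Stmt13
namespace Stmt13
section
variable {k : Type*} [Field k] {n : ℕ}
local notation "Y" => y k n
local notation "P" => psi k n
local notation "β" => blk k n
local notation "W" => Wm k n

lemma Kkey (m : ℕ) (h : m + 1 < n) :
    W m * ((∑ j ∈ Finset.range (m+1), (j+1) • Y j) * β m)
      = (∑ j ∈ Finset.range (m+1), Y j) * (W m * β m)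
        + (W m * β m) * (∑ j ∈ Finset.range (m+1), j • Y (j+1)) := by
  have key : ∀ j ∈ Finset.range (m+1), (j+1) • (W m * (Y j * β m))
      = (j+1) • (W m * β m * Y (j+1)) + (if j = 0 then W m * blk' k n m else 0) := by
    intro j hj
    simp only [Finset.mem_range] at hj
    cases j with
    | zero =>
        rw [if_pos rfl]
        simp only [zero_add, one_smul]
        rw [y0_blk m (by omega), mul_add, ← mul_assoc]
    | succ t =>
        rw [if_neg (by omega), add_zero]
        obtain ⟨r, hr⟩ := y_blk_mid (k := k) (n := n) m t (by omega) (by omega)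
        rw [hr, mul_add, ← mul_assoc (W m) (P t) r, Wm_psi (show t < m by omega),
          zero_mul, add_zero, ← mul_assoc]
  have e1 : W m * ((∑ j ∈ Finset.range (m+1), (j+1) • Y j) * β m)
      = ∑ j ∈ Finset.range (m+1), (j+1) • (W m * (Y j * β m)) := by
    rw [Finset.sum_mul, Finset.mul_sum]
    simp only [smul_mul_assoc, mul_smul_comm]
  have e2 : ∑ j ∈ Finset.range (m+1), (j+1) • (W m * (Y j * β m))
      = (∑ j ∈ Finset.range (m+1), (j+1) • (W m * β m * Y (j+1))) + W m * blk' k n m := by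
    rw [Finset.sum_congr rfl key, Finset.sum_add_distrib, Finset.sum_ite_eq']
    simp
  have e3 : ∑ j ∈ Finset.range (m+1), (j+1) • (W m * β m * Y (j+1))
      = (∑ j ∈ Finset.range (m+1), j • (W m * β m * Y (j+1)))
        + (W m * β m) * (∑ j ∈ Finset.range (m+1), Y (j+1)) := by
    simp only [succ_nsmul]
    rw [Finset.sum_add_distrib, Finset.mul_sum]
  have e4 : ∑ j ∈ Finset.range (m+1), j • (W m * β m * Y (j+1))
      = (W m * β m) * (∑ j ∈ Finset.range (m+1), j • Y (j+1)) := by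
    rw [Finset.mul_sum]
    simp only [mul_smul_comm, mul_assoc]
  have hkill : W m * rem k n m = 0 := kill_rem m (W m) (fun j hj => Wm_psi hj)
  have e5 : W m * blk' k n m = (W m * β m) * Y 0 - Y (m+1) * (W m * β m) := by
    have ht := congrArg (fun z => W m * z) (yTop_blk m h)
    rw [mul_sub, mul_sub, hkill, sub_zero, ← mul_assoc, ← mul_assoc,
      ← y_Wm_far (m+1) m (by omega), mul_assoc (Y (m+1))] at ht
    -- ht : Y (m+1) * (W m * β m) = W m * β m * Y 0 - W m * blk' k n m
    rw [eq_sub_iff_add_eq] at ht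
    rw [← ht]
    abel
  have e7 : (∑ j ∈ Finset.range (m+1), Y j) * (W m * β m)
      = (W m * β m) * (∑ j ∈ Finset.range (m+1+1), Y j) - Y (m+1) * (W m * β m) := by
    have hc := sum_y_Wm (k := k) (n := n) (m+1) (m+1+1) h (by omega)
    rw [eq_sub_iff_add_eq]
    have hs : (∑ j ∈ Finset.range (m+1), Y j) * (W m * β m) + Y (m+1) * (W m * β m)
        = (∑ j ∈ Finset.range (m+1+1), Y j) * (W m * β m) := by
      rw [← add_mul, ← Finset.sum_range_succ]
    rw [hs]
    exact hc.trans rfl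
  have e8 : (W m * β m) * (∑ j ∈ Finset.range (m+1), Y (j+1)) + (W m * β m) * Y 0
      = (W m * β m) * (∑ j ∈ Finset.range (m+1+1), Y j) := by
    rw [← mul_add, ← Finset.sum_range_succ' (fun j => Y j) (m+1)]
  rw [e1, e2, e3, e4, e5, e7, add_assoc, ← add_sub_assoc, e8]
  exact add_comm _ _
end
end Stmt13
namespace Stmt13
section
variable {k : Type*} [Field k] {n : ℕ}
local notation "Y" => y k n
local notation "P" => psi k n
local notation "β" => blk k n
local notation "W" => Wm k n

lemma DWm (D : NH k n →ₗ[k] NH k n)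
    (hLeib : ∀ a b : NH k n, D (a * b) = D a * b + a * D b)
    (hpsi : ∀ i : ℕ, D (P i) = -(Y i * P i) - P i * Y (i+1)) (m : ℕ) :
    m < n → D (W m) = -((∑ i ∈ Finset.range (m+1), (m-i) • Y i) * W m)
      - W m * (∑ i ∈ Finset.range (m+1), i • Y i) := by
  induction m with
  | zero =>
      intro _
      show D 1 = -((∑ i ∈ Finset.range 1, (0-i) • Y i) * 1) - 1 * (∑ i ∈ Finset.range 1, i • Y i)
      rw [D_one D hLeib]
      simp
  | succ m ih =>
      intro hm
      have ihm := ih (by omega)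
      have hBS : (∑ i ∈ Finset.range (m+1), i • Y i) + (∑ i ∈ Finset.range (m+1), Y i)
          = ∑ i ∈ Finset.range (m+1), (i+1) • Y i := by
        rw [← Finset.sum_add_distrib]
        simp only [succ_nsmul]
      have hK : W m * (((∑ i ∈ Finset.range (m+1), i • Y i)
            + (∑ i ∈ Finset.range (m+1), Y i)) * β m)
          = (∑ j ∈ Finset.range (m+1), Y j) * (W m * β m)
            + (W m * β m) * (∑ j ∈ Finset.range (m+1), j • Y (j+1)) := by
        rw [hBS]; exact Kkey m hm
      have hA : (∑ i ∈ Finset.range (m+1+1), (m+1-i) • Y i)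
          = (∑ i ∈ Finset.range (m+1), (m-i) • Y i) + ∑ i ∈ Finset.range (m+1), Y i := by
        rw [Finset.sum_range_succ, Nat.sub_self, zero_smul, add_zero, ← Finset.sum_add_distrib]
        refine Finset.sum_congr rfl (fun i hi => ?_)
        simp only [Finset.mem_range] at hi
        rw [show m + 1 - i = (m - i) + 1 by omega, succ_nsmul]
      have hB : (∑ i ∈ Finset.range (m+1+1), i • Y i)
          = (∑ j ∈ Finset.range (m+1), j • Y (j+1)) + ∑ j ∈ Finset.range (m+1), Y (j+1) := by
        rw [Finset.sum_range_succ' (fun i => i • Y i) (m+1)]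
        simp only [succ_nsmul, zero_smul, add_zero]
        rw [Finset.sum_add_distrib]
      have hW' : W (m+1) = W m * β m := rfl
      rw [hW', hLeib (W m) (β m), ihm, Dblk D hLeib hpsi m, hA, hB]
      -- pure algebra from here
      rw [sub_mul, neg_mul', mul_assoc, mul_sub, mul_neg', add_mul, mul_add]
      rw [← mul_assoc (W m) (β m)]
      rw [mul_assoc (W m) (∑ i ∈ Finset.range (m+1), i • Y i) (β m)]
      have hcomb : W m * ((∑ i ∈ Finset.range (m+1), i • Y i) * β m)
            + W m * ((∑ j ∈ Finset.range (m+1), Y j) * β m)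
          = (∑ j ∈ Finset.range (m+1), Y j) * (W m * β m)
            + (W m * β m) * (∑ j ∈ Finset.range (m+1), j • Y (j+1)) := by
        rw [← hK, add_mul, mul_add]
      have hre : ∀ a u v w p q : NH k n, u + v = p + q →
          -a - u + (-v - w) = -(a + p) - (q + w) := by
        intro a u v w p q huv
        calc -a - u + (-v - w) = -a - (u + v) - w := by abel
          _ = -a - (p + q) - w := by rw [huv]
          _ = -(a + p) - (q + w) := by abel
      exact hre _ _ _ _ _ _ hcomb
end
end Stmt13
namespace Stmt13
section
variable {k : Type*} [Field k] {n : ℕ}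
local notation "Y" => y k n
local notation "P" => psi k n

lemma y_pow_comm (i j t : ℕ) : Y j * Y i ^ t = Y i ^ t * Y j := by
  induction t with
  | zero => rw [pow_zero, one_mul, mul_one]
  | succ t ih => rw [pow_succ, ← mul_assoc, ih, mul_assoc, yy_comm j i, ← mul_assoc]

lemma y_Yd_comm (j t : ℕ) :
    Y j * ((List.range t).map (fun i => Y i ^ i)).prod
      = ((List.range t).map (fun i => Y i ^ i)).prod * Y j := by
  induction t with
  | zero => simp
  | succ t ih =>
      rw [List.range_succ, List.map_append, List.prod_append]
      simp only [List.map_cons, List.map_nil, List.prod_cons, List.prod_nil, mul_one]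
      rw [← mul_assoc, ih, mul_assoc, y_pow_comm t j t, ← mul_assoc]

lemma D_pow (D : NH k n →ₗ[k] NH k n)
    (hLeib : ∀ a b : NH k n, D (a * b) = D a * b + a * D b)
    (hy : ∀ i : ℕ, D (Y i) = Y i * Y i) (i t : ℕ) :
    D (Y i ^ t) = t • (Y i ^ (t+1)) := by
  induction t with
  | zero => rw [pow_zero, D_one D hLeib, zero_smul]
  | succ t ih =>
      have h2 : Y i ^ t * (Y i * Y i) = Y i ^ (t+2) := by
        rw [pow_succ, pow_succ, mul_assoc]
      rw [pow_succ, hLeib, ih, hy, smul_mul_assoc, ← pow_succ, h2, succ_nsmul]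

lemma D_Yd (D : NH k n →ₗ[k] NH k n)
    (hLeib : ∀ a b : NH k n, D (a * b) = D a * b + a * D b)
    (hy : ∀ i : ℕ, D (Y i) = Y i * Y i) (t : ℕ) :
    D (((List.range t).map (fun i => Y i ^ i)).prod)
      = (∑ i ∈ Finset.range t, i • Y i) * ((List.range t).map (fun i => Y i ^ i)).prod := by
  induction t with
  | zero =>
      simp only [List.range_zero, List.map_nil, List.prod_nil]
      rw [D_one D hLeib]
      simp
  | succ t ih =>
      have hsplit : ((List.range (t+1)).map (fun i => Y i ^ i)).prod
          = ((List.range t).map (fun i => Y i ^ i)).prod * Y t ^ t := by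
        rw [List.range_succ, List.map_append, List.prod_append]
        simp
      have hpow : ((List.range t).map (fun i => Y i ^ i)).prod * Y t ^ (t+1)
          = Y t * (((List.range t).map (fun i => Y i ^ i)).prod * Y t ^ t) := by
        rw [pow_succ', ← mul_assoc, ← y_Yd_comm, mul_assoc]
      rw [hsplit, hLeib, ih, D_pow D hLeib hy t t, mul_smul_comm, hpow,
        Finset.sum_range_succ, add_mul, mul_assoc, smul_mul_assoc]
end
end Stmt13


open Stmt13 in
/-- In the nilHecke algebra `NH_n` with `p`-differential `∂`, the element
`e_n' = ψ_{w₀} · y_1^0 y_2^1 ⋯ y_n^{n-1}` satisfies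
`∂(e_n') = −(Σ_{i<n} (n−1−i) • y_i) · e_n'` (0-based indexing of the paper's
`−Σ_{i=1}^n (n−i) y_i e_n'`). -/
theorem stmt_13 (k : Type*) [Field k] (p : ℕ) [Fact p.Prime] [CharP k p] (n : ℕ)
    (D : NH k n →ₗ[k] NH k n)
    (hLeib : ∀ a b : NH k n, D (a * b) = D a * b + a * D b)
    (hy : ∀ i : ℕ, D (y k n i) = y k n i * y k n i)
    (hpsi : ∀ i : ℕ, D (psi k n i) =
      -(y k n i * psi k n i) - psi k n i * y k n (i+1)) :
    D (ePrime k n) = -((∑ i ∈ Finset.range n, (n - 1 - i) • y k n i) * ePrime k n) := by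
  obtain _ | N := n
  · have h1 : ePrime k 0 = 1 := by simp [ePrime, psiW0]
    rw [h1, D_one D hLeib]
    simp
  · have hD := DWm D hLeib hpsi N (by omega)
    have hYd := D_Yd D hLeib hy (N+1)
    have hE : ePrime k (N+1) = Wm k (N+1) N
        * ((List.range (N+1)).map (fun i => y k (N+1) i ^ i)).prod := by
      rw [ePrime, psiW0_eq]
      norm_num
    rw [hE, hLeib, hD, hYd]
    simp only [Nat.add_sub_cancel]
    rw [sub_mul, neg_mul', mul_assoc, mul_assoc]
    abel
end
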